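/- Let 0 < α ≤ 1 and let A : 𝓑 → ℝ be α-Hölder with constant H. Then there exist a real number λ_A > 0 and a continuous function ψ_A : 𝓑 → ℝ with ψ_A(x) > 0 for all x, such that L_A ψ_A = λ_A ψ_A, i.e. ∫_M e^{A(ax)} ψ_A(ax) da = λ_A ψ_A(x) for all x ∈ 𝓑. Moreover ψ_A can be chosen so that log ψ_A is α-Hölder with constant (2^α/(2^α − 1))·H. -/

import Mathlib

open MeasureTheory Filter Topology

noncomputable section

instance : Fact (0 < 2 * Real.pi) := ⟨by positivity⟩

/-- The circle `M = ℝ/2πℤ` with arc-length metric. -/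
abbrev Circ : Type := AddCircle (2 * Real.pi)

/-- The normalized Haar (Lebesgue) probability measure on the circle. -/
def haarC : Measure Circ := AddCircle.haarAddCircle

/-- The Bernoulli space `𝓑 = M^ℕ`. -/
abbrev Bs : Type := ℕ → Circ

/-- The left shift `σ`. -/
def shift (x : Bs) : Bs := fun n => x (n + 1)

/-- Prepending a symbol: `cons a x = ax = (a, x₀, x₁, …)`. -/
def cons (a : Circ) (x : Bs) : Bs := fun n =>
  match n with
  | 0 => a
  | k + 1 => x k

/-- The metric `d(x,y) = Σ_k 2^{-k} d_M(x_k, y_k)` on `𝓑`. -/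
def dB (x y : Bs) : ℝ := ∑' k : ℕ, (1 / 2 : ℝ) ^ k * dist (x k) (y k)

/-- `A` is α-Hölder with constant `H` for the metric `dB`. -/
def IsHolderB (α H : ℝ) (A : Bs → ℝ) : Prop := ∀ x y, |A x - A y| ≤ H * dB x y ^ α

/-- The Ruelle operator `L_A ψ (x) = ∫_M e^{A(ax)} ψ(ax) da`. -/
def Ruelle (A : Bs → ℝ) (ψ : Bs → ℝ) : Bs → ℝ :=
  fun x => ∫ a, Real.exp (A (cons a x)) * ψ (cons a x) ∂haarC


namespace RPF

instance haarC_prob : IsProbabilityMeasure haarC := by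
  unfold haarC; infer_instance

/-- base point of `Bs`. -/
def pt : Bs := fun _ => (0 : Circ)

/-- A bound for distances on the circle. -/
def cD : ℝ := Metric.diam (Set.univ : Set Circ)

/-- A bound for `dB`. -/
def DD : ℝ := 2 * cD + 1

lemma cD_nonneg : 0 ≤ cD := Metric.diam_nonneg

lemma DD_pos : 0 < DD := by have := cD_nonneg; unfold DD; linarith

lemma dist_le_cD (a b : Circ) : dist a b ≤ cD :=
  Metric.dist_le_diam_of_mem (Metric.isBounded_of_compactSpace) trivial trivial

lemma summable_dB (x y : Bs) :
    Summable (fun k : ℕ => (1 / 2 : ℝ) ^ k * dist (x k) (y k)) := by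
  apply Summable.of_nonneg_of_le (fun k => by positivity)
    (fun k => ?_) (summable_geometric_two.mul_right cD)
  exact mul_le_mul_of_nonneg_left (dist_le_cD _ _) (by positivity)

lemma dB_nonneg (x y : Bs) : 0 ≤ dB x y :=
  tsum_nonneg fun k => by positivity

lemma dB_comm (x y : Bs) : dB x y = dB y x := by
  unfold dB; congr 1; funext k; rw [dist_comm]

lemma dB_le_DD (x y : Bs) : dB x y ≤ DD := by
  have h1 : dB x y ≤ ∑' k : ℕ, (1 / 2 : ℝ) ^ k * cD := by
    apply Summable.tsum_le_tsum (fun k => mul_le_mul_of_nonneg_left (dist_le_cD _ _) (by positivity))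
      (summable_dB x y) (summable_geometric_two.mul_right cD)
  have h2 : ∑' k : ℕ, (1 / 2 : ℝ) ^ k * cD = 2 * cD := by
    rw [tsum_mul_right, tsum_geometric_two]
  have := cD_nonneg
  unfold DD; linarith [h1, h2.le, h2.ge]

lemma dB_cons (a : Circ) (x y : Bs) : dB (cons a x) (cons a y) = dB x y / 2 := by
  unfold dB
  rw [Summable.tsum_eq_zero_add (summable_dB (cons a x) (cons a y))]
  have h0 : (1 / 2 : ℝ) ^ (0 : ℕ) * dist (cons a x 0) (cons a y 0) = 0 := by
    simp [cons]
  have h1 : ∀ k : ℕ, (1 / 2 : ℝ) ^ (k + 1) * dist (cons a x (k + 1)) (cons a y (k + 1))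
      = (1 / 2 : ℝ) * ((1 / 2 : ℝ) ^ k * dist (x k) (y k)) := by
    intro k; show (1/2:ℝ)^(k+1) * dist (x k) (y k) = _
    rw [pow_succ]; ring
  rw [h0]
  simp_rw [h1]
  rw [tsum_mul_left]
  ring

lemma eventually_dB_lt (x : Bs) {ε : ℝ} (hε : 0 < ε) : ∀ᶠ y in 𝓝 x, dB x y < ε := by
  obtain ⟨N, hN⟩ : ∃ N : ℕ, (1 / 2 : ℝ) ^ N < ε / (2 * (2 * cD + 1)) := by
    apply exists_pow_lt_of_lt_one (by have := cD_nonneg; positivity)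
    norm_num
  set ε' : ℝ := ε / (2 * (N + 1)) with hε'
  have hε'0 : 0 < ε' := by positivity
  set U : Set Bs := ⋂ i : Fin N, (fun y : Bs => y i.1) ⁻¹' Metric.ball (x i.1) ε' with hU
  have hUopen : IsOpen U :=
    isOpen_iInter_of_finite fun i => (continuous_apply i.1).isOpen_preimage _ Metric.isOpen_ball
  have hxU : x ∈ U := Set.mem_iInter.2 fun i => Metric.mem_ball_self hε'0
  filter_upwards [hUopen.mem_nhds hxU] with y hy
  have hsplit := Summable.sum_add_tsum_nat_add (f := fun k : ℕ => (1 / 2 : ℝ) ^ k * dist (x k) (y k))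
    N (summable_dB x y)
  have hhead : ∑ k ∈ Finset.range N, (1 / 2 : ℝ) ^ k * dist (x k) (y k) ≤ N * ε' := by
    calc ∑ k ∈ Finset.range N, (1 / 2 : ℝ) ^ k * dist (x k) (y k)
        ≤ ∑ k ∈ Finset.range N, ε' := by
          apply Finset.sum_le_sum
          intro k hk
          have hky : dist (x k) (y k) < ε' := by
            have := Set.mem_iInter.1 hy ⟨k, Finset.mem_range.1 hk⟩
            simpa [dist_comm] using this
          have h1 : (1 / 2 : ℝ) ^ k ≤ 1 := by
            apply pow_le_one₀ <;> norm_num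
          calc (1 / 2 : ℝ) ^ k * dist (x k) (y k) ≤ 1 * dist (x k) (y k) :=
                mul_le_mul_of_nonneg_right h1 dist_nonneg
            _ ≤ ε' := by rw [one_mul]; exact hky.le
      _ = N * ε' := by rw [Finset.sum_const, Finset.card_range]; ring
  have htail : ∑' k : ℕ, (1 / 2 : ℝ) ^ (k + N) * dist (x (k + N)) (y (k + N))
      ≤ (1 / 2 : ℝ) ^ N * (2 * cD) := by
    have hs1 : Summable (fun k : ℕ => (1 / 2 : ℝ) ^ (k + N) * dist (x (k + N)) (y (k + N))) :=
      (summable_dB x y).comp_injective (add_left_injective N)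
    have hs2 : Summable (fun k : ℕ => (1 / 2 : ℝ) ^ (k + N) * cD) := by
      simp_rw [pow_add]
      exact ((summable_geometric_two.mul_right (cD * (1/2:ℝ)^N))).congr (fun k => by ring)
    calc ∑' k : ℕ, (1 / 2 : ℝ) ^ (k + N) * dist (x (k + N)) (y (k + N))
        ≤ ∑' k : ℕ, (1 / 2 : ℝ) ^ (k + N) * cD :=
          Summable.tsum_le_tsum (fun k => mul_le_mul_of_nonneg_left (dist_le_cD _ _) (by positivity)) hs1 hs2
      _ = (1 / 2 : ℝ) ^ N * (2 * cD) := by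
          have : ∀ k : ℕ, (1 / 2 : ℝ) ^ (k + N) * cD = (1/2:ℝ)^k * ((1/2:ℝ)^N * cD) := by
            intro k; rw [pow_add]; ring
          simp_rw [this]
          rw [tsum_mul_right, tsum_geometric_two]
          ring
  have hN2 : (1 / 2 : ℝ) ^ N * (2 * cD) < ε / 2 := by
    have hc : (0:ℝ) < 2 * (2 * cD + 1) := by have := cD_nonneg; linarith
    have h5 := mul_lt_mul_of_pos_right hN hc
    have h6 : ε / (2 * (2 * cD + 1)) * (2 * (2 * cD + 1)) = ε := by rw [div_mul_cancel₀ _ hc.ne']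
    rw [h6] at h5
    have h2 : (0:ℝ) < (1/2:ℝ)^N := by positivity
    have := cD_nonneg
    nlinarith [h5, h2]
  have hNe : (N : ℝ) * ε' < ε / 2 := by
    rw [hε']
    have hNp : (0:ℝ) < (N:ℝ) + 1 := by positivity
    rw [div_eq_mul_inv ε (2 * ((N:ℝ) + 1))]
    have hkey : (N:ℝ) * (ε * (2 * ((N:ℝ) + 1))⁻¹) < ((N:ℝ)+1) * (ε * (2 * ((N:ℝ) + 1))⁻¹) := by
      apply mul_lt_mul_of_pos_right (by linarith) (by positivity)
    have heq : ((N:ℝ)+1) * (ε * (2 * ((N:ℝ) + 1))⁻¹) = ε / 2 := by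
      field_simp
    linarith [hkey, heq.le, heq.ge]
  have : dB x y = (∑ k ∈ Finset.range N, (1 / 2 : ℝ) ^ k * dist (x k) (y k))
      + ∑' k : ℕ, (1 / 2 : ℝ) ^ (k + N) * dist (x (k + N)) (y (k + N)) := by
    unfold dB; rw [hsplit]
  rw [this]
  calc _ ≤ (N : ℝ) * ε' + (1 / 2 : ℝ) ^ N * (2 * cD) := add_le_add hhead htail
    _ < ε / 2 + ε / 2 := add_lt_add hNe hN2
    _ = ε := by ring

lemma continuous_of_holderB {αe : ℝ} (hα0 : 0 < αe) {c : ℝ} (hc : 0 ≤ c) {f : Bs → ℝ}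
    (hf : ∀ x y, |f x - f y| ≤ c * dB x y ^ αe) : Continuous f := by
  rw [continuous_iff_continuousAt]
  intro x
  rw [ContinuousAt, Metric.tendsto_nhds]
  intro ε hε
  set r : ℝ := (ε / (c + 1)) ^ (αe⁻¹) with hr
  have hr0 : 0 < r := Real.rpow_pos_of_pos (by positivity) _
  filter_upwards [eventually_dB_lt x hr0] with y hy
  rw [Real.dist_eq]
  have h1 : |f y - f x| ≤ c * dB y x ^ αe := hf y x
  have h2 : dB y x ^ αe ≤ r ^ αe := by
    apply Real.rpow_le_rpow (dB_nonneg y x) _ hα0.le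
    rw [dB_comm]; exact hy.le
  have h3 : r ^ αe = ε / (c + 1) := Real.rpow_inv_rpow (by positivity) hα0.ne'
  have h4 : c * (ε / (c + 1)) < ε := by
    rw [div_eq_mul_inv]
    have hlt : c * (c + 1)⁻¹ < 1 := by
      rw [mul_inv_lt_iff₀ (by positivity)]; linarith
    calc c * (ε * (c + 1)⁻¹) = ε * (c * (c + 1)⁻¹) := by ring
      _ < ε * 1 := by exact mul_lt_mul_of_pos_left hlt hε
      _ = ε := mul_one ε
  calc |f y - f x| ≤ c * dB y x ^ αe := h1
    _ ≤ c * r ^ αe := mul_le_mul_of_nonneg_left h2 hc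
    _ = c * (ε / (c + 1)) := by rw [h3]
    _ < ε := h4

lemma continuous_cons_left (x : Bs) : Continuous fun a : Circ => cons a x := by
  apply continuous_pi
  intro n
  cases n with
  | zero => exact continuous_id
  | succ k => simpa [cons] using continuous_const

lemma continuous_cons_right (a : Circ) : Continuous fun x : Bs => cons a x := by
  apply continuous_pi
  intro n
  cases n with
  | zero => simpa [cons] using continuous_const
  | succ k => simpa [cons] using continuous_apply k

lemma integrable_cont {f : Circ → ℝ} (hf : Continuous f) : Integrable f haarC :=
  hf.integrable_of_hasCompactSupport (IsClosed.isCompact (isClosed_tsupport f))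

lemma exists_forall_le {X : Type*} [TopologicalSpace X] [CompactSpace X] [Nonempty X]
    {f : X → ℝ} (hf : Continuous f) : ∃ z, ∀ w, f z ≤ f w := by
  obtain ⟨z, _, hz⟩ := IsCompact.exists_isMinOn isCompact_univ Set.univ_nonempty hf.continuousOn
  exact ⟨z, fun w => hz (Set.mem_univ w)⟩

lemma exists_forall_ge {X : Type*} [TopologicalSpace X] [CompactSpace X] [Nonempty X]
    {f : X → ℝ} (hf : Continuous f) : ∃ z, ∀ w, f w ≤ f z := by
  obtain ⟨z, hz⟩ := exists_forall_le hf.neg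
  exact ⟨z, fun w => by have := hz w; simpa using this⟩

lemma exists_abs_bound {X : Type*} [TopologicalSpace X] [CompactSpace X] [Nonempty X]
    {f : X → ℝ} (hf : Continuous f) : ∃ C : ℝ, 0 ≤ C ∧ ∀ z, |f z| ≤ C := by
  obtain ⟨z, hz⟩ := exists_forall_ge hf.abs
  exact ⟨|f z|, abs_nonneg _, hz⟩

lemma integral_pos_of_cont {f : Circ → ℝ} (hf : Continuous f) (h0 : ∀ a, 0 < f a) :
    0 < ∫ a, f a ∂haarC := by
  obtain ⟨a₀, ha₀⟩ := exists_forall_le hf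
  have h1 : ∫ a, f a₀ ∂haarC ≤ ∫ a, f a ∂haarC :=
    integral_mono (integrable_const _) (integrable_cont hf) ha₀
  have h2 : ∫ (_ : Circ), f a₀ ∂haarC = f a₀ := by
    simp [measure_univ]
  rw [h2] at h1
  exact lt_of_lt_of_le (h0 a₀) h1

end RPF

namespace RPF

/-- All data for the main construction. -/
structure Pack where
  αe : ℝ
  H : ℝ
  A : Bs → ℝ
  hα0 : 0 < αe
  hα1 : αe ≤ 1
  hH : 0 < H
  hA : IsHolderB αe H A

namespace Pack

variable (P : Pack)

/-- The target Hölder constant. -/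
def Cs : ℝ := 2 ^ P.αe / (2 ^ P.αe - 1) * P.H

/-- The geometric-sum constant `H/(2^α-1)`. -/
def KA : ℝ := P.H / (2 ^ P.αe - 1)

lemma two_rpow_gt : 1 < (2 : ℝ) ^ P.αe :=
  (Real.one_lt_rpow_iff_of_pos two_pos).2 (Or.inl ⟨one_lt_two, P.hα0⟩)

lemma hden : 0 < (2 : ℝ) ^ P.αe - 1 := by have := P.two_rpow_gt; linarith

lemma Cs_pos : 0 < P.Cs := by
  have h1 := P.hden
  have h2 := P.hH
  have h3 : (0:ℝ) < 2 ^ P.αe := by linarith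
  unfold Cs; positivity

lemma KA_pos : 0 < P.KA := div_pos P.hH P.hden

lemma KA_fix : P.KA + P.H = 2 ^ P.αe * P.KA := by
  have := P.hden
  unfold KA; field_simp; ring

lemma HCs : P.H + P.Cs ≤ 2 ^ P.αe * P.Cs := by
  have h1 := P.hden
  have h2 := P.hH
  rw [← mul_le_mul_iff_left₀ P.hden]
  have hCs' : P.Cs * (2 ^ P.αe - 1) = 2 ^ P.αe * P.H := by
    unfold Cs; field_simp
  have expand : (P.H + P.Cs) * (2 ^ P.αe - 1)
      = P.H * (2 ^ P.αe - 1) + P.Cs * (2 ^ P.αe - 1) := by ring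
  have expand2 : 2 ^ P.αe * P.Cs * (2 ^ P.αe - 1)
      = 2 ^ P.αe * (P.Cs * (2 ^ P.αe - 1)) := by ring
  rw [expand, expand2, hCs']
  nlinarith [sq_nonneg ((2:ℝ) ^ P.αe - 1), P.hH]

lemma A_cont : Continuous P.A := continuous_of_holderB P.hα0 P.hH.le P.hA

/-- Transfer of a Hölder estimate through `cons`. -/
lemma holder_cons {c : ℝ} {f : Bs → ℝ} (hf : IsHolderB P.αe c f) (a : Circ) (x y : Bs) :
    f (cons a x) ≤ f (cons a y) + c * (dB x y / 2) ^ P.αe := by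
  have h := hf (cons a x) (cons a y)
  rw [dB_cons] at h
  have := le_abs_self (f (cons a x) - f (cons a y))
  linarith

/-- Pair transfer operator with weights along the first coordinate. -/
def PL (Φ : Bs × Bs → ℝ) : Bs × Bs → ℝ :=
  fun z => ∫ a, Real.exp (P.A (cons a z.1)) * Φ (cons a z.1, cons a z.2) ∂haarC

/-- Pair transfer operator with weights along the second coordinate. -/
def PM (Φ : Bs × Bs → ℝ) : Bs × Bs → ℝ :=
  fun z => ∫ a, Real.exp (P.A (cons a z.2)) * Φ (cons a z.1, cons a z.2) ∂haarC

lemma cont_aux1 {Θ : Bs × Bs → ℝ} (hΘ : Continuous Θ) (x y : Bs) :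
    Continuous fun a : Circ => Real.exp (P.A (cons a x)) * Θ (cons a x, cons a y) :=
  ((Real.continuous_exp.comp (P.A_cont.comp (continuous_cons_left x))).mul
    (hΘ.comp ((continuous_cons_left x).prodMk (continuous_cons_left y))))

lemma cont_aux2 {Θ : Bs × Bs → ℝ} (hΘ : Continuous Θ) (x y : Bs) :
    Continuous fun a : Circ => Real.exp (P.A (cons a y)) * Θ (cons a x, cons a y) :=
  ((Real.continuous_exp.comp (P.A_cont.comp (continuous_cons_left y))).mul
    (hΘ.comp ((continuous_cons_left x).prodMk (continuous_cons_left y))))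

lemma integrable_aux1 {Θ : Bs × Bs → ℝ} (hΘ : Continuous Θ) (x y : Bs) :
    Integrable (fun a : Circ => Real.exp (P.A (cons a x)) * Θ (cons a x, cons a y)) haarC :=
  integrable_cont (P.cont_aux1 hΘ x y)

lemma integrable_aux2 {Θ : Bs × Bs → ℝ} (hΘ : Continuous Θ) (x y : Bs) :
    Integrable (fun a : Circ => Real.exp (P.A (cons a y)) * Θ (cons a x, cons a y)) haarC :=
  integrable_cont (P.cont_aux2 hΘ x y)

lemma PL_cont {Φ : Bs × Bs → ℝ} (hΦ : Continuous Φ) : Continuous (P.PL Φ) := by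
  obtain ⟨CA, _, hCA⟩ := exists_abs_bound P.A_cont
  obtain ⟨CF, hCF0, hCF⟩ := exists_abs_bound hΦ
  apply continuous_of_dominated (bound := fun _ => Real.exp CA * CF)
  · intro z
    exact (P.cont_aux1 hΦ z.1 z.2).aestronglyMeasurable
  · intro z
    apply Filter.Eventually.of_forall
    intro a
    rw [Real.norm_eq_abs, abs_mul, abs_of_pos (Real.exp_pos _)]
    apply mul_le_mul _ (hCF _) (abs_nonneg _) (Real.exp_pos _).le
    exact Real.exp_le_exp.2 ((le_abs_self _).trans (hCA _))
  · exact integrable_const _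
  · apply Filter.Eventually.of_forall
    intro a
    exact ((Real.continuous_exp.comp (P.A_cont.comp
        ((continuous_cons_right a).comp continuous_fst))).mul
      (hΦ.comp (((continuous_cons_right a).comp continuous_fst).prodMk
        ((continuous_cons_right a).comp continuous_snd))))

lemma PM_cont {Φ : Bs × Bs → ℝ} (hΦ : Continuous Φ) : Continuous (P.PM Φ) := by
  obtain ⟨CA, _, hCA⟩ := exists_abs_bound P.A_cont
  obtain ⟨CF, hCF0, hCF⟩ := exists_abs_bound hΦ
  apply continuous_of_dominated (bound := fun _ => Real.exp CA * CF)
  · intro z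
    exact (P.cont_aux2 hΦ z.1 z.2).aestronglyMeasurable
  · intro z
    apply Filter.Eventually.of_forall
    intro a
    rw [Real.norm_eq_abs, abs_mul, abs_of_pos (Real.exp_pos _)]
    apply mul_le_mul _ (hCF _) (abs_nonneg _) (Real.exp_pos _).le
    exact Real.exp_le_exp.2 ((le_abs_self _).trans (hCA _))
  · exact integrable_const _
  · apply Filter.Eventually.of_forall
    intro a
    exact ((Real.continuous_exp.comp (P.A_cont.comp
        ((continuous_cons_right a).comp continuous_snd))).mul
      (hΦ.comp (((continuous_cons_right a).comp continuous_fst).prodMk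
        ((continuous_cons_right a).comp continuous_snd))))

lemma PL_iter_cont (n : ℕ) {Φ : Bs × Bs → ℝ} (hΦ : Continuous Φ) :
    Continuous (P.PL^[n] Φ) := by
  induction n with
  | zero => exact hΦ
  | succ n ih => rw [Function.iterate_succ_apply']; exact P.PL_cont ih

lemma PM_iter_cont (n : ℕ) {Φ : Bs × Bs → ℝ} (hΦ : Continuous Φ) :
    Continuous (P.PM^[n] Φ) := by
  induction n with
  | zero => exact hΦ
  | succ n ih => rw [Function.iterate_succ_apply']; exact P.PM_cont ih

lemma PL_iter_nonneg (n : ℕ) {Φ : Bs × Bs → ℝ} (h : ∀ z, 0 ≤ Φ z) :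
    ∀ z, 0 ≤ P.PL^[n] Φ z := by
  induction n with
  | zero => exact h
  | succ n ih =>
    intro z
    rw [Function.iterate_succ_apply']
    exact integral_nonneg fun a => mul_nonneg (Real.exp_pos _).le (ih _)

lemma PM_iter_nonneg (n : ℕ) {Φ : Bs × Bs → ℝ} (h : ∀ z, 0 ≤ Φ z) :
    ∀ z, 0 ≤ P.PM^[n] Φ z := by
  induction n with
  | zero => exact h
  | succ n ih =>
    intro z
    rw [Function.iterate_succ_apply']
    exact integral_nonneg fun a => mul_nonneg (Real.exp_pos _).le (ih _)

lemma PL_iter_pos (n : ℕ) {Φ : Bs × Bs → ℝ} (hΦ : Continuous Φ) (h : ∀ z, 0 < Φ z) :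
    ∀ z, 0 < P.PL^[n] Φ z := by
  induction n with
  | zero => exact h
  | succ n ih =>
    intro z
    rw [Function.iterate_succ_apply']
    apply integral_pos_of_cont (P.cont_aux1 (P.PL_iter_cont n hΦ) z.1 z.2)
    intro a
    exact mul_pos (Real.exp_pos _) (ih _)

lemma PM_iter_pos (n : ℕ) {Φ : Bs × Bs → ℝ} (hΦ : Continuous Φ) (h : ∀ z, 0 < Φ z) :
    ∀ z, 0 < P.PM^[n] Φ z := by
  induction n with
  | zero => exact h
  | succ n ih =>
    intro z
    rw [Function.iterate_succ_apply']
    apply integral_pos_of_cont (P.cont_aux2 (P.PM_iter_cont n hΦ) z.1 z.2)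
    intro a
    exact mul_pos (Real.exp_pos _) (ih _)

lemma PL_iter_mono (n : ℕ) {Φ Ψ : Bs × Bs → ℝ} (hΦ : Continuous Φ) (hΨ : Continuous Ψ)
    (x y : Bs) (h : ∀ p q : Bs, dB p q ≤ dB x y / 2 ^ n → Φ (p, q) ≤ Ψ (p, q)) :
    P.PL^[n] Φ (x, y) ≤ P.PL^[n] Ψ (x, y) := by
  induction n generalizing x y with
  | zero =>
    exact h x y (by rw [pow_zero, div_one])
  | succ n ih =>
    rw [Function.iterate_succ_apply', Function.iterate_succ_apply']
    apply integral_mono (P.integrable_aux1 (P.PL_iter_cont n hΦ) x y)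
      (P.integrable_aux1 (P.PL_iter_cont n hΨ) x y)
    intro a
    apply mul_le_mul_of_nonneg_left _ (Real.exp_pos _).le
    apply ih (cons a x) (cons a y)
    intro p q hpq
    apply h p q
    rw [dB_cons] at hpq
    calc dB p q ≤ dB x y / 2 / 2 ^ n := hpq
      _ = dB x y / 2 ^ (n + 1) := by rw [div_div, pow_succ]; ring_nf

lemma PM_iter_mono (n : ℕ) {Φ Ψ : Bs × Bs → ℝ} (hΦ : Continuous Φ) (hΨ : Continuous Ψ)
    (x y : Bs) (h : ∀ p q : Bs, dB p q ≤ dB x y / 2 ^ n → Φ (p, q) ≤ Ψ (p, q)) :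
    P.PM^[n] Φ (x, y) ≤ P.PM^[n] Ψ (x, y) := by
  induction n generalizing x y with
  | zero =>
    exact h x y (by rw [pow_zero, div_one])
  | succ n ih =>
    rw [Function.iterate_succ_apply', Function.iterate_succ_apply']
    apply integral_mono (P.integrable_aux2 (P.PM_iter_cont n hΦ) x y)
      (P.integrable_aux2 (P.PM_iter_cont n hΨ) x y)
    intro a
    apply mul_le_mul_of_nonneg_left _ (Real.exp_pos _).le
    apply ih (cons a x) (cons a y)
    intro p q hpq
    apply h p q
    rw [dB_cons] at hpq
    calc dB p q ≤ dB x y / 2 / 2 ^ n := hpq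
      _ = dB x y / 2 ^ (n + 1) := by rw [div_div, pow_succ]; ring_nf

lemma PL_iter_sub (n : ℕ) {Φ Ψ : Bs × Bs → ℝ} (hΦ : Continuous Φ) (hΨ : Continuous Ψ) :
    ∀ z, P.PL^[n] (fun w => Φ w - Ψ w) z = P.PL^[n] Φ z - P.PL^[n] Ψ z := by
  induction n with
  | zero => intro z; rfl
  | succ n ih =>
    intro z
    rw [Function.iterate_succ_apply', Function.iterate_succ_apply',
      Function.iterate_succ_apply']
    show ∫ a, Real.exp (P.A (cons a z.1)) * (P.PL^[n] (fun w => Φ w - Ψ w))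
        (cons a z.1, cons a z.2) ∂haarC = _
    have : ∀ a : Circ, Real.exp (P.A (cons a z.1)) * (P.PL^[n] (fun w => Φ w - Ψ w))
        (cons a z.1, cons a z.2)
        = Real.exp (P.A (cons a z.1)) * P.PL^[n] Φ (cons a z.1, cons a z.2)
          - Real.exp (P.A (cons a z.1)) * P.PL^[n] Ψ (cons a z.1, cons a z.2) := by
      intro a; rw [ih]; ring
    simp_rw [this]
    exact integral_sub (P.integrable_aux1 (P.PL_iter_cont n hΦ) z.1 z.2)
      (P.integrable_aux1 (P.PL_iter_cont n hΨ) z.1 z.2)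

lemma PM_iter_sub (n : ℕ) {Φ Ψ : Bs × Bs → ℝ} (hΦ : Continuous Φ) (hΨ : Continuous Ψ) :
    ∀ z, P.PM^[n] (fun w => Φ w - Ψ w) z = P.PM^[n] Φ z - P.PM^[n] Ψ z := by
  induction n with
  | zero => intro z; rfl
  | succ n ih =>
    intro z
    rw [Function.iterate_succ_apply', Function.iterate_succ_apply',
      Function.iterate_succ_apply']
    show ∫ a, Real.exp (P.A (cons a z.2)) * (P.PM^[n] (fun w => Φ w - Ψ w))
        (cons a z.1, cons a z.2) ∂haarC = _
    have : ∀ a : Circ, Real.exp (P.A (cons a z.2)) * (P.PM^[n] (fun w => Φ w - Ψ w))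
        (cons a z.1, cons a z.2)
        = Real.exp (P.A (cons a z.2)) * P.PM^[n] Φ (cons a z.1, cons a z.2)
          - Real.exp (P.A (cons a z.2)) * P.PM^[n] Ψ (cons a z.1, cons a z.2) := by
      intro a; rw [ih]; ring
    simp_rw [this]
    exact integral_sub (P.integrable_aux2 (P.PM_iter_cont n hΦ) z.1 z.2)
      (P.integrable_aux2 (P.PM_iter_cont n hΨ) z.1 z.2)

lemma PL_iter_const_mul (n : ℕ) (c : ℝ) {Φ : Bs × Bs → ℝ} (hΦ : Continuous Φ) :
    ∀ z, P.PL^[n] (fun w => c * Φ w) z = c * P.PL^[n] Φ z := by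
  induction n with
  | zero => intro z; rfl
  | succ n ih =>
    intro z
    rw [Function.iterate_succ_apply', Function.iterate_succ_apply']
    show ∫ a, Real.exp (P.A (cons a z.1)) * (P.PL^[n] (fun w => c * Φ w))
        (cons a z.1, cons a z.2) ∂haarC = _
    have : ∀ a : Circ, Real.exp (P.A (cons a z.1)) * (P.PL^[n] (fun w => c * Φ w))
        (cons a z.1, cons a z.2)
        = c * (Real.exp (P.A (cons a z.1)) * P.PL^[n] Φ (cons a z.1, cons a z.2)) := by
      intro a; rw [ih]; ring
    simp_rw [this]
    exact integral_const_mul c _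

lemma PM_iter_const_mul (n : ℕ) (c : ℝ) {Φ : Bs × Bs → ℝ} (hΦ : Continuous Φ) :
    ∀ z, P.PM^[n] (fun w => c * Φ w) z = c * P.PM^[n] Φ z := by
  induction n with
  | zero => intro z; rfl
  | succ n ih =>
    intro z
    rw [Function.iterate_succ_apply', Function.iterate_succ_apply']
    show ∫ a, Real.exp (P.A (cons a z.2)) * (P.PM^[n] (fun w => c * Φ w))
        (cons a z.1, cons a z.2) ∂haarC = _
    have : ∀ a : Circ, Real.exp (P.A (cons a z.2)) * (P.PM^[n] (fun w => c * Φ w))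
        (cons a z.1, cons a z.2)
        = c * (Real.exp (P.A (cons a z.2)) * P.PM^[n] Φ (cons a z.1, cons a z.2)) := by
      intro a; rw [ih]; ring
    simp_rw [this]
    exact integral_const_mul c _

lemma KA_halved {d : ℝ} (hd : 0 ≤ d) :
    (P.H + P.KA) * (d / 2) ^ P.αe = P.KA * d ^ P.αe := by
  rw [Real.div_rpow hd (by norm_num : (0:ℝ) ≤ 2)]
  have h2 : (0:ℝ) < (2:ℝ) ^ P.αe := Real.rpow_pos_of_pos two_pos _
  rw [add_comm, KA_fix]
  field_simp

lemma PL_le_PM (n : ℕ) {Φ : Bs × Bs → ℝ} (hΦ : Continuous Φ) (hΦ0 : ∀ z, 0 ≤ Φ z)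
    (x y : Bs) :
    P.PL^[n] Φ (x, y) ≤ Real.exp (P.KA * dB x y ^ P.αe) * P.PM^[n] Φ (x, y) := by
  induction n generalizing x y with
  | zero =>
    apply le_mul_of_one_le_left (hΦ0 _)
    apply Real.one_le_exp
    have := dB_nonneg x y
    have := P.KA_pos
    positivity
  | succ n ih =>
    rw [Function.iterate_succ_apply', Function.iterate_succ_apply']
    have key : ∀ a : Circ,
        Real.exp (P.A (cons a x)) * P.PL^[n] Φ (cons a x, cons a y)
        ≤ Real.exp (P.KA * dB x y ^ P.αe) *
          (Real.exp (P.A (cons a y)) * P.PM^[n] Φ (cons a x, cons a y)) := by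
      intro a
      have h1 : P.A (cons a x) ≤ P.A (cons a y) + P.H * (dB x y / 2) ^ P.αe :=
        P.holder_cons P.hA a x y
      have h2 : P.PL^[n] Φ (cons a x, cons a y)
          ≤ Real.exp (P.KA * dB (cons a x) (cons a y) ^ P.αe) *
            P.PM^[n] Φ (cons a x, cons a y) := ih _ _
      rw [dB_cons] at h2
      have h3 : 0 ≤ P.PM^[n] Φ (cons a x, cons a y) := P.PM_iter_nonneg n hΦ0 _
      have h4 : 0 ≤ P.PL^[n] Φ (cons a x, cons a y) := P.PL_iter_nonneg n hΦ0 _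
      calc Real.exp (P.A (cons a x)) * P.PL^[n] Φ (cons a x, cons a y)
          ≤ Real.exp (P.A (cons a y) + P.H * (dB x y / 2) ^ P.αe) *
            (Real.exp (P.KA * (dB x y / 2) ^ P.αe) * P.PM^[n] Φ (cons a x, cons a y)) := by
            apply mul_le_mul (Real.exp_le_exp.2 h1) h2 h4 (Real.exp_pos _).le
        _ = Real.exp ((P.H + P.KA) * (dB x y / 2) ^ P.αe) *
            (Real.exp (P.A (cons a y)) * P.PM^[n] Φ (cons a x, cons a y)) := by
            rw [add_mul, Real.exp_add, Real.exp_add]; ring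
        _ = Real.exp (P.KA * dB x y ^ P.αe) *
            (Real.exp (P.A (cons a y)) * P.PM^[n] Φ (cons a x, cons a y)) := by
            rw [P.KA_halved (dB_nonneg x y)]
    calc ∫ a, Real.exp (P.A (cons a x)) * P.PL^[n] Φ (cons a x, cons a y) ∂haarC
        ≤ ∫ a, Real.exp (P.KA * dB x y ^ P.αe) *
            (Real.exp (P.A (cons a y)) * P.PM^[n] Φ (cons a x, cons a y)) ∂haarC := by
          apply integral_mono (P.integrable_aux1 (P.PL_iter_cont n hΦ) x y)
            (((P.integrable_aux2 (P.PM_iter_cont n hΦ) x y)).const_mul _) key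
      _ = Real.exp (P.KA * dB x y ^ P.αe) *
          ∫ a, Real.exp (P.A (cons a y)) * P.PM^[n] Φ (cons a x, cons a y) ∂haarC :=
          integral_const_mul _ _

lemma PM_le_PL (n : ℕ) {Φ : Bs × Bs → ℝ} (hΦ : Continuous Φ) (hΦ0 : ∀ z, 0 ≤ Φ z)
    (x y : Bs) :
    P.PM^[n] Φ (x, y) ≤ Real.exp (P.KA * dB x y ^ P.αe) * P.PL^[n] Φ (x, y) := by
  induction n generalizing x y with
  | zero =>
    apply le_mul_of_one_le_left (hΦ0 _)
    apply Real.one_le_exp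
    have := dB_nonneg x y
    have := P.KA_pos
    positivity
  | succ n ih =>
    rw [Function.iterate_succ_apply', Function.iterate_succ_apply']
    have key : ∀ a : Circ,
        Real.exp (P.A (cons a y)) * P.PM^[n] Φ (cons a x, cons a y)
        ≤ Real.exp (P.KA * dB x y ^ P.αe) *
          (Real.exp (P.A (cons a x)) * P.PL^[n] Φ (cons a x, cons a y)) := by
      intro a
      have h1 : P.A (cons a y) ≤ P.A (cons a x) + P.H * (dB x y / 2) ^ P.αe := by
        have := P.holder_cons P.hA a y x
        rw [dB_comm y x] at this
        exact this
      have h2 : P.PM^[n] Φ (cons a x, cons a y)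
          ≤ Real.exp (P.KA * dB (cons a x) (cons a y) ^ P.αe) *
            P.PL^[n] Φ (cons a x, cons a y) := ih _ _
      rw [dB_cons] at h2
      have h3 : 0 ≤ P.PL^[n] Φ (cons a x, cons a y) := P.PL_iter_nonneg n hΦ0 _
      have h4 : 0 ≤ P.PM^[n] Φ (cons a x, cons a y) := P.PM_iter_nonneg n hΦ0 _
      calc Real.exp (P.A (cons a y)) * P.PM^[n] Φ (cons a x, cons a y)
          ≤ Real.exp (P.A (cons a x) + P.H * (dB x y / 2) ^ P.αe) *
            (Real.exp (P.KA * (dB x y / 2) ^ P.αe) * P.PL^[n] Φ (cons a x, cons a y)) := by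
            apply mul_le_mul (Real.exp_le_exp.2 h1) h2 h4 (Real.exp_pos _).le
        _ = Real.exp ((P.H + P.KA) * (dB x y / 2) ^ P.αe) *
            (Real.exp (P.A (cons a x)) * P.PL^[n] Φ (cons a x, cons a y)) := by
            rw [add_mul, Real.exp_add, Real.exp_add]; ring
        _ = Real.exp (P.KA * dB x y ^ P.αe) *
            (Real.exp (P.A (cons a x)) * P.PL^[n] Φ (cons a x, cons a y)) := by
            rw [P.KA_halved (dB_nonneg x y)]
    calc ∫ a, Real.exp (P.A (cons a y)) * P.PM^[n] Φ (cons a x, cons a y) ∂haarC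
        ≤ ∫ a, Real.exp (P.KA * dB x y ^ P.αe) *
            (Real.exp (P.A (cons a x)) * P.PL^[n] Φ (cons a x, cons a y)) ∂haarC := by
          apply integral_mono (P.integrable_aux2 (P.PM_iter_cont n hΦ) x y)
            (((P.integrable_aux1 (P.PL_iter_cont n hΦ) x y)).const_mul _) key
      _ = Real.exp (P.KA * dB x y ^ P.αe) *
          ∫ a, Real.exp (P.A (cons a x)) * P.PL^[n] Φ (cons a x, cons a y) ∂haarC :=
          integral_const_mul _ _

end Pack
end RPF

namespace RPF
namespace Pack

variable (P : Pack)

/-- The nonlinear log-transfer operator. -/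
def T (g : Bs → ℝ) : Bs → ℝ :=
  fun x => Real.log (∫ a, Real.exp (P.A (cons a x) + g (cons a x)) ∂haarC)

lemma T_integrand_cont {g : Bs → ℝ} (hg : Continuous g) (x : Bs) :
    Continuous fun a : Circ => Real.exp (P.A (cons a x) + g (cons a x)) :=
  Real.continuous_exp.comp ((P.A_cont.comp (continuous_cons_left x)).add
    (hg.comp (continuous_cons_left x)))

lemma T_integral_pos {g : Bs → ℝ} (hg : Continuous g) (x : Bs) :
    0 < ∫ a, Real.exp (P.A (cons a x) + g (cons a x)) ∂haarC :=
  integral_pos_of_cont (P.T_integrand_cont hg x) (fun a => Real.exp_pos _)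

lemma exp_T {g : Bs → ℝ} (hg : Continuous g) (x : Bs) :
    Real.exp (P.T g x) = ∫ a, Real.exp (P.A (cons a x) + g (cons a x)) ∂haarC :=
  Real.exp_log (P.T_integral_pos hg x)

/-- Iterates of `T` through the pair operator `PL`. -/
lemma PL_iter_exp_fst {g : Bs → ℝ} (hg : Continuous g) (n : ℕ) :
    Continuous (P.T^[n] g) ∧
      ∀ x y : Bs, P.PL^[n] (fun z => Real.exp (g z.1)) (x, y) = Real.exp (P.T^[n] g x) := by
  induction n with
  | zero => exact ⟨hg, fun x y => rfl⟩
  | succ n ih =>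
    obtain ⟨hc, he⟩ := ih
    have hΦ : Continuous fun z : Bs × Bs => Real.exp (g z.1) :=
      Real.continuous_exp.comp (hg.comp continuous_fst)
    have key : ∀ x y : Bs,
        P.PL^[n + 1] (fun z => Real.exp (g z.1)) (x, y) = Real.exp (P.T^[n + 1] g x) := by
      intro x y
      rw [Function.iterate_succ_apply']
      show (∫ a, Real.exp (P.A (cons a x)) *
          (P.PL^[n] fun z => Real.exp (g z.1)) (cons a x, cons a y) ∂haarC) = _
      have h1 : ∀ a : Circ, Real.exp (P.A (cons a x)) *
          (P.PL^[n] fun z => Real.exp (g z.1)) (cons a x, cons a y)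
          = Real.exp (P.A (cons a x) + P.T^[n] g (cons a x)) := by
        intro a
        rw [he (cons a x) (cons a y), ← Real.exp_add]
      simp_rw [h1]
      rw [← P.exp_T hc x, Function.iterate_succ_apply']
    refine ⟨?_, key⟩
    have heq : P.T^[n + 1] g = fun x =>
        Real.log (P.PL^[n + 1] (fun z => Real.exp (g z.1)) (x, x)) := by
      funext x
      rw [key x x, Real.log_exp]
    rw [heq]
    apply Continuous.log
    · exact (P.PL_iter_cont (n + 1) hΦ).comp (continuous_id.prodMk continuous_id)
    · intro x
      exact (P.PL_iter_pos (n + 1) hΦ (fun z => Real.exp_pos _) _).ne'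

lemma T_iter_cont {g : Bs → ℝ} (hg : Continuous g) (n : ℕ) : Continuous (P.T^[n] g) :=
  (P.PL_iter_exp_fst hg n).1

lemma T_cont {g : Bs → ℝ} (hg : Continuous g) : Continuous (P.T g) := by
  have := P.T_iter_cont hg 1
  rwa [Function.iterate_one] at this

/-- Iterates of `T` through the pair operator `PM`. -/
lemma PM_iter_exp_snd {g : Bs → ℝ} (hg : Continuous g) (n : ℕ) :
    ∀ x y : Bs, P.PM^[n] (fun z => Real.exp (g z.2)) (x, y) = Real.exp (P.T^[n] g y) := by
  induction n with
  | zero => exact fun x y => rfl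
  | succ n ih =>
    intro x y
    rw [Function.iterate_succ_apply']
    show (∫ a, Real.exp (P.A (cons a y)) *
        (P.PM^[n] fun z => Real.exp (g z.2)) (cons a x, cons a y) ∂haarC) = _
    have h1 : ∀ a : Circ, Real.exp (P.A (cons a y)) *
        (P.PM^[n] fun z => Real.exp (g z.2)) (cons a x, cons a y)
        = Real.exp (P.A (cons a y) + P.T^[n] g (cons a y)) := by
      intro a
      rw [ih (cons a x) (cons a y), ← Real.exp_add]
    simp_rw [h1]
    rw [← P.exp_T (P.T_iter_cont hg n) y, Function.iterate_succ_apply']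

/-- Comparison principle for `T`. -/
lemma T_pair_le {g h : Bs → ℝ} (hg : Continuous g) (hh : Continuous h) (x y : Bs) (c : ℝ)
    (bound : ∀ a : Circ, P.A (cons a x) + g (cons a x) ≤ P.A (cons a y) + h (cons a y) + c) :
    P.T g x ≤ P.T h y + c := by
  have h1 : ∫ a, Real.exp (P.A (cons a x) + g (cons a x)) ∂haarC
      ≤ ∫ a, Real.exp c * Real.exp (P.A (cons a y) + h (cons a y)) ∂haarC := by
    apply integral_mono (integrable_cont (P.T_integrand_cont hg x))
      ((integrable_cont (P.T_integrand_cont hh y)).const_mul _)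
    intro a
    show Real.exp (P.A (cons a x) + g (cons a x)) ≤ Real.exp c * Real.exp (P.A (cons a y) + h (cons a y))
    rw [← Real.exp_add]
    exact Real.exp_le_exp.2 (by linarith [bound a])
  rw [integral_const_mul] at h1
  have h2 := Real.log_le_log (P.T_integral_pos hg x) h1
  rw [Real.log_mul (Real.exp_ne_zero c) (P.T_integral_pos hh y).ne', Real.log_exp] at h2
  show Real.log _ ≤ Real.log _ + c
  linarith

lemma T_add_const {g : Bs → ℝ} (hg : Continuous g) (c : ℝ) :
    P.T (fun z => g z + c) = fun x => P.T g x + c := by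
  funext x
  unfold T
  have h1 : ∀ a : Circ, Real.exp (P.A (cons a x) + (g (cons a x) + c))
      = Real.exp c * Real.exp (P.A (cons a x) + g (cons a x)) := by
    intro a; rw [← Real.exp_add]; ring_nf
  simp_rw [h1]
  rw [integral_const_mul, Real.log_mul (Real.exp_ne_zero c) (P.T_integral_pos hg x).ne',
    Real.log_exp]
  ring

lemma Cs_halved {d : ℝ} (hd : 0 ≤ d) :
    (P.H + P.Cs) * (d / 2) ^ P.αe ≤ P.Cs * d ^ P.αe := by
  rw [Real.div_rpow hd (by norm_num : (0:ℝ) ≤ 2)]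
  have h2 : (0:ℝ) < (2:ℝ) ^ P.αe := Real.rpow_pos_of_pos two_pos _
  rw [mul_div_assoc'] 
  rw [div_le_iff₀ h2]
  have hd2 : 0 ≤ d ^ P.αe := Real.rpow_nonneg hd _
  calc (P.H + P.Cs) * d ^ P.αe ≤ (2 ^ P.αe * P.Cs) * d ^ P.αe :=
        mul_le_mul_of_nonneg_right P.HCs hd2
    _ = P.Cs * d ^ P.αe * 2 ^ P.αe := by ring

lemma T_hol {g : Bs → ℝ} (hg : Continuous g) (hg' : IsHolderB P.αe P.Cs g) :
    IsHolderB P.αe P.Cs (P.T g) := by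
  intro x y
  have key : ∀ x y : Bs, P.T g x ≤ P.T g y + P.Cs * dB x y ^ P.αe := by
    intro x y
    have h1 : P.T g x ≤ P.T g y + (P.H + P.Cs) * (dB x y / 2) ^ P.αe := by
      apply P.T_pair_le hg hg x y
      intro a
      have h2 := P.holder_cons P.hA a x y
      have h3 := P.holder_cons hg' a x y
      have h4 : 0 ≤ (dB x y / 2) ^ P.αe :=
        Real.rpow_nonneg (by have := dB_nonneg x y; linarith) _
      have : P.H * (dB x y / 2) ^ P.αe + P.Cs * (dB x y / 2) ^ P.αe
          = (P.H + P.Cs) * (dB x y / 2) ^ P.αe := by ring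
      linarith
    linarith [P.Cs_halved (dB_nonneg x y), h1]
  have h1 := key x y
  have h2 := key y x
  rw [dB_comm y x] at h2
  rw [abs_sub_le_iff]
  constructor <;> linarith

lemma T_lip {g h : Bs → ℝ} (hg : Continuous g) (hh : Continuous h) {c : ℝ}
    (hgh : ∀ z, |g z - h z| ≤ c) (x : Bs) : |P.T g x - P.T h x| ≤ c := by
  have h1 : P.T g x ≤ P.T h x + c := by
    apply P.T_pair_le hg hh x x
    intro a
    have := abs_le.1 (hgh (cons a x))
    linarith [this.2]
  have h2 : P.T h x ≤ P.T g x + c := by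
    apply P.T_pair_le hh hg x x
    intro a
    have := abs_le.1 (hgh (cons a x))
    linarith [this.1]
  rw [abs_sub_le_iff]
  constructor <;> linarith

lemma T_iter_add_const {g : Bs → ℝ} (hg : Continuous g) (c : ℝ) (k : ℕ) :
    P.T^[k] (fun z => g z + c) = fun x => P.T^[k] g x + c := by
  induction k generalizing g with
  | zero => rfl
  | succ k ih =>
    rw [Function.iterate_succ_apply, Function.iterate_succ_apply]
    rw [P.T_add_const hg c]
    exact ih (P.T_cont hg)

/-- Oscillation of a function. -/
def osc (w : Bs → ℝ) : ℝ := (⨆ z, w z) - ⨅ z, w z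

lemma bddAbove_range {w : Bs → ℝ} (hw : Continuous w) : BddAbove (Set.range w) :=
  (isCompact_range hw).bddAbove

lemma bddBelow_range {w : Bs → ℝ} (hw : Continuous w) : BddBelow (Set.range w) :=
  (isCompact_range hw).bddBelow

lemma iInf_le_apply {w : Bs → ℝ} (hw : Continuous w) (z : Bs) : (⨅ z, w z) ≤ w z :=
  ciInf_le (bddBelow_range hw) z

lemma apply_le_iSup {w : Bs → ℝ} (hw : Continuous w) (z : Bs) : w z ≤ ⨆ z, w z :=
  le_ciSup (bddAbove_range hw) z

lemma sub_le_osc {w : Bs → ℝ} (hw : Continuous w) (x y : Bs) : w x - w y ≤ osc w :=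
  sub_le_sub (apply_le_iSup hw x) (iInf_le_apply hw y)

lemma osc_nonneg {w : Bs → ℝ} (hw : Continuous w) : 0 ≤ osc w := by
  have := sub_le_osc hw pt pt
  simpa using this

lemma osc_le_of {w : Bs → ℝ} (hw : Continuous w) {B : ℝ} (h : ∀ x y, w x - w y ≤ B) :
    osc w ≤ B := by
  have h1 : ∀ x, w x ≤ B + ⨅ z, w z := by
    intro x
    have : w x - B ≤ ⨅ z, w z := le_ciInf fun y => by linarith [h x y]
    linarith
  have h2 : (⨆ z, w z) ≤ B + ⨅ z, w z := ciSup_le h1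
  unfold osc
  linarith

/-- Oscillation bound `Δ₀`. -/
def Del : ℝ := 4 * P.Cs * DD ^ P.αe

/-- The Doeblin constant. -/
def delb : ℝ := Real.exp (-(2 * P.KA * DD ^ P.αe))

/-- The contraction factor. -/
def th : ℝ := 1 - P.delb * (1 - Real.exp (-P.Del)) / P.Del

lemma DD_rpow_pos : 0 < DD ^ P.αe := Real.rpow_pos_of_pos DD_pos _

lemma Del_pos : 0 < P.Del := by
  have := P.Cs_pos; have := P.DD_rpow_pos; unfold Del; positivity

lemma delb_pos : 0 < P.delb := Real.exp_pos _

lemma delb_lt_one : P.delb < 1 := by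
  rw [delb, Real.exp_lt_one_iff]
  have := P.KA_pos; have := P.DD_rpow_pos
  nlinarith

lemma delb_le_one : P.delb ≤ 1 := P.delb_lt_one.le

lemma th_lt_one : P.th < 1 := by
  unfold th
  have h1 : 0 < 1 - Real.exp (-P.Del) := by
    have : Real.exp (-P.Del) < 1 := by
      rw [Real.exp_lt_one_iff]; linarith [P.Del_pos]
    linarith
  have := P.delb_pos
  have := P.Del_pos
  have : 0 < P.delb * (1 - Real.exp (-P.Del)) / P.Del := by positivity
  linarith

lemma th_nonneg : 0 ≤ P.th := by
  unfold th
  have h1 : 1 - Real.exp (-P.Del) ≤ P.Del := by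
    have := Real.add_one_le_exp (-P.Del)
    linarith
  have h2 : 0 ≤ 1 - Real.exp (-P.Del) := by
    have : Real.exp (-P.Del) ≤ 1 := by
      rw [Real.exp_le_one_iff]; linarith [P.Del_pos]
    linarith
  have h3 : P.delb * (1 - Real.exp (-P.Del)) ≤ 1 * P.Del :=
    mul_le_mul P.delb_le_one h1 h2 zero_le_one
  rw [one_mul] at h3
  have h4 : P.delb * (1 - Real.exp (-P.Del)) / P.Del ≤ 1 :=
    (div_le_one P.Del_pos).2 h3
  linarith

lemma log_ineq {Δ : ℝ} (h0 : 0 ≤ Δ) (h1 : Δ ≤ P.Del) :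
    Real.log (P.delb + (1 - P.delb) * Real.exp Δ) ≤ P.th * Δ := by
  set δ := P.delb with hδ
  have hδ0 : 0 < δ := P.delb_pos
  have hδ1 : δ < 1 := P.delb_lt_one
  have hexpΔ : 0 < Real.exp Δ := Real.exp_pos _
  have hexpnΔ : Real.exp (-Δ) ≤ 1 := by rw [Real.exp_le_one_iff]; linarith
  have hexpnΔ0 : 0 < Real.exp (-Δ) := Real.exp_pos _
  have hx1 : δ * (1 - Real.exp (-Δ)) < 1 := by nlinarith
  have hE : δ + (1 - δ) * Real.exp Δ = Real.exp Δ * (1 - δ * (1 - Real.exp (-Δ))) := by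
    rw [Real.exp_neg]
    field_simp
    ring
  rw [hE, Real.log_mul hexpΔ.ne' (by linarith), Real.log_exp]
  have hlog : Real.log (1 - δ * (1 - Real.exp (-Δ))) ≤ -(δ * (1 - Real.exp (-Δ))) := by
    have := Real.log_le_sub_one_of_pos (x := 1 - δ * (1 - Real.exp (-Δ))) (by linarith)
    linarith
  -- convexity of exp
  have hconv : Real.exp (-Δ) ≤ (1 - Δ / P.Del) + (Δ / P.Del) * Real.exp (-P.Del) := by
    have hDel := P.Del_pos
    have ht0 : 0 ≤ Δ / P.Del := by positivity
    have ht1 : Δ / P.Del ≤ 1 := (div_le_one hDel).2 h1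
    have := convexOn_exp.2 (Set.mem_univ (0:ℝ)) (Set.mem_univ (-P.Del))
      (by linarith : (0:ℝ) ≤ 1 - Δ / P.Del) ht0 (by ring)
    simp only [smul_eq_mul, mul_zero, Real.exp_zero, mul_one] at this
    have harg : (1 - Δ / P.Del) * 0 + (Δ / P.Del) * (-P.Del) = -Δ := by
      field_simp; ring
    rw [zero_add] at this
    have harg2 : Δ / P.Del * -P.Del = -Δ := by field_simp
    rw [harg2] at this
    linarith [this]
  have hmono : δ * ((Δ / P.Del) * (1 - Real.exp (-P.Del))) ≤ δ * (1 - Real.exp (-Δ)) := by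
    apply mul_le_mul_of_nonneg_left _ hδ0.le
    nlinarith [hconv]
  have hfinal : Δ - δ * (1 - Real.exp (-Δ)) ≤ P.th * Δ := by
    unfold th
    rw [← hδ]
    have : δ * ((Δ / P.Del) * (1 - Real.exp (-P.Del)))
        = δ * (1 - Real.exp (-P.Del)) / P.Del * Δ := by
      field_simp
    nlinarith [hmono, this]
  linarith

lemma delta_mono {δ1 E : ℝ} (h1 : P.delb ≤ δ1) (h2 : δ1 ≤ 1) (hE : 1 ≤ E) :
    δ1 + (1 - δ1) * E ≤ P.delb + (1 - P.delb) * E := by nlinarith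

end Pack
end RPF

namespace RPF
namespace Pack

variable (P : Pack)

set_option maxHeartbeats 2000000 in
lemma main_est {u v : Bs → ℝ} (hu : Continuous u) (hv : Continuous v)
    (hu' : IsHolderB P.αe P.Cs u) (hv' : IsHolderB P.αe P.Cs v) (n : ℕ) (x y : Bs) :
    (P.T^[n] u x - P.T^[n] v x) - (P.T^[n] u y - P.T^[n] v y)
      ≤ 4 * (P.Cs * (dB x y / 2 ^ n) ^ P.αe)
        + Real.log (P.delb + (1 - P.delb) * Real.exp (osc (fun z => u z - v z))) := by
  have hα0 := P.hα0
  have hCs0 := P.Cs_pos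
  set w := fun z : Bs => u z - v z with hw_def
  have hw : Continuous w := hu.sub hv
  set m := ⨅ z, w z with hm_def
  set M := ⨆ z, w z with hM_def
  have hosc : osc w = M - m := rfl
  have hm : ∀ z, m ≤ w z := fun z => iInf_le_apply hw z
  have hM : ∀ z, w z ≤ M := fun z => apply_le_iSup hw z
  have hMm : 0 ≤ M - m := by rw [← hosc]; exact osc_nonneg hw
  have whol : ∀ p q : Bs, |w p - w q| ≤ 2 * P.Cs * dB p q ^ P.αe := by
    intro p q
    have h1 := hu' p q
    have h2 := hv' p q
    have : w p - w q = (u p - u q) - (v p - v q) := by rw [hw_def]; ring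
    rw [this]
    calc |(u p - u q) - (v p - v q)| ≤ |u p - u q| + |v p - v q| := abs_sub _ _
      _ ≤ 2 * P.Cs * dB p q ^ P.αe := by linarith only [h1, h2]
  set d := dB x y with hd_def
  have hd0 : 0 ≤ d := dB_nonneg x y
  have hdD : d ≤ DD := dB_le_DD x y
  set rn : ℝ := d / 2 ^ n with hrn_def
  have hrn0 : 0 ≤ rn := by positivity
  set εd : ℝ := P.Cs * rn ^ P.αe with hεd_def
  have hεd0 : 0 ≤ εd := by
    have : (0:ℝ) ≤ rn ^ P.αe := Real.rpow_nonneg hrn0 _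
    positivity
  have hrp : ∀ p q : Bs, dB p q ≤ rn → dB p q ^ P.αe ≤ rn ^ P.αe := by
    intro p q h
    exact Real.rpow_le_rpow (dB_nonneg p q) h hα0.le
  -- the test functions
  set Φu : Bs × Bs → ℝ := fun z => Real.exp (u z.1) with hΦu_def
  set Φv : Bs × Bs → ℝ := fun z => Real.exp (v z.1) with hΦv_def
  set Φc : Bs × Bs → ℝ := fun z => Real.exp (v z.1 + w z.2) with hΦc_def
  set Ψu : Bs × Bs → ℝ := fun z => Real.exp (u z.2) with hΨu_def
  set Ψv : Bs × Bs → ℝ := fun z => Real.exp (v z.2) with hΨv_def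
  have hΦuc : Continuous Φu := Real.continuous_exp.comp (hu.comp continuous_fst)
  have hΦvc : Continuous Φv := Real.continuous_exp.comp (hv.comp continuous_fst)
  have hΦcc : Continuous Φc :=
    Real.continuous_exp.comp ((hv.comp continuous_fst).add (hw.comp continuous_snd))
  have hΨuc : Continuous Ψu := Real.continuous_exp.comp (hu.comp continuous_snd)
  have hΨvc : Continuous Ψv := Real.continuous_exp.comp (hv.comp continuous_snd)
  -- the quantities
  set X := P.PL^[n] Φu (x, y) with hX_def
  set Zx := P.PL^[n] Φv (x, y) with hZx_def
  set Xc := P.PL^[n] Φc (x, y) with hXc_def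
  set Yc := P.PM^[n] Φc (x, y) with hYc_def
  set W := P.PM^[n] Φv (x, y) with hW_def
  set Y := P.PM^[n] Ψu (x, y) with hY_def
  set Zy := P.PM^[n] Ψv (x, y) with hZy_def
  have hXp : 0 < X := P.PL_iter_pos n hΦuc (fun z => Real.exp_pos _) _
  have hZxp : 0 < Zx := P.PL_iter_pos n hΦvc (fun z => Real.exp_pos _) _
  have hXcp : 0 < Xc := P.PL_iter_pos n hΦcc (fun z => Real.exp_pos _) _
  have hYcp : 0 < Yc := P.PM_iter_pos n hΦcc (fun z => Real.exp_pos _) _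
  have hWp : 0 < W := P.PM_iter_pos n hΦvc (fun z => Real.exp_pos _) _
  have hYp : 0 < Y := P.PM_iter_pos n hΨuc (fun z => Real.exp_pos _) _
  have hZyp : 0 < Zy := P.PM_iter_pos n hΨvc (fun z => Real.exp_pos _) _
  -- (h1)
  have h1 : X ≤ Real.exp (2 * εd) * Xc := by
    have hmono := P.PL_iter_mono n (Ψ := fun z => Real.exp (2 * εd) * Φc z) hΦuc (continuous_const.mul hΦcc) x y ?_
    · calc X ≤ P.PL^[n] (fun z => Real.exp (2 * εd) * Φc z) (x, y) := hmono
        _ = Real.exp (2 * εd) * Xc := P.PL_iter_const_mul n _ hΦcc (x, y)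
    · intro p q hpq
      show Real.exp (u p) ≤ Real.exp (2 * εd) * Real.exp (v p + w q)
      rw [← Real.exp_add]
      apply Real.exp_le_exp.2
      have hup : u p = v p + w p := by rw [hw_def]; ring
      have h2 := (abs_le.1 (whol p q)).2
      have h3 : 2 * P.Cs * dB p q ^ P.αe ≤ 2 * εd := by
        rw [hεd_def]
        have h4 := mul_le_mul_of_nonneg_left (hrp p q hpq)
          (by linarith only [hCs0] : (0:ℝ) ≤ 2 * P.Cs)
        calc 2 * P.Cs * dB p q ^ P.αe = 2 * P.Cs * dB p q ^ P.αe := rfl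
          _ ≤ 2 * P.Cs * rn ^ P.αe := h4
          _ = 2 * (P.Cs * rn ^ P.αe) := by ring
      linarith only [hup, h2, h3]
  -- Doeblin quantities
  set βd : ℝ := Real.exp (-(P.KA * d ^ P.αe)) with hβd_def
  have hβd0 : 0 < βd := Real.exp_pos _
  have hβd1 : βd ≤ 1 := by
    rw [hβd_def, Real.exp_le_one_iff]
    exact neg_nonpos.2 (mul_nonneg P.KA_pos.le (Real.rpow_nonneg hd0 _))
  have hβmul : βd * Real.exp (P.KA * d ^ P.αe) = 1 := by
    rw [hβd_def, ← Real.exp_add]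
    simp
  set expM : ℝ := Real.exp M with hexpM_def
  have hexpM0 : 0 < expM := Real.exp_pos _
  -- (h2)
  set Φh : Bs × Bs → ℝ := fun z => expM * Φv z - Φc z with hΦh_def
  have hΦhc : Continuous Φh := (continuous_const.mul hΦvc).sub hΦcc
  have hΦh0 : ∀ z, 0 ≤ Φh z := by
    intro z
    show 0 ≤ expM * Real.exp (v z.1) - Real.exp (v z.1 + w z.2)
    rw [Real.exp_add]
    have h1 : Real.exp (w z.2) ≤ expM := Real.exp_le_exp.2 (hM z.2)
    have h2 : 0 ≤ Real.exp (v z.1) * (expM - Real.exp (w z.2)) :=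
      mul_nonneg (Real.exp_pos _).le (by linarith only [h1])
    have h3 : expM * Real.exp (v z.1) - Real.exp (v z.1) * Real.exp (w z.2)
        = Real.exp (v z.1) * (expM - Real.exp (w z.2)) := by ring
    rw [h3]
    exact h2
  have hPLh : P.PL^[n] Φh (x, y) = expM * Zx - Xc := by
    rw [hΦh_def]
    rw [P.PL_iter_sub n (Φ := fun z => expM * Φv z) (continuous_const.mul hΦvc) hΦcc (x, y)]
    rw [P.PL_iter_const_mul n expM hΦvc (x, y)]
  have hPMh : P.PM^[n] Φh (x, y) = expM * W - Yc := by
    rw [hΦh_def]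
    rw [P.PM_iter_sub n (Φ := fun z => expM * Φv z) (continuous_const.mul hΦvc) hΦcc (x, y)]
    rw [P.PM_iter_const_mul n expM hΦvc (x, y)]
  have h2core : βd * (expM * W - Yc) ≤ expM * Zx - Xc := by
    have hc5 := P.PM_le_PL n hΦhc hΦh0 x y
    rw [hPLh, hPMh] at hc5
    calc βd * (expM * W - Yc) ≤ βd * (Real.exp (P.KA * dB x y ^ P.αe) * (expM * Zx - Xc)) :=
          mul_le_mul_of_nonneg_left hc5 hβd0.le
      _ = (βd * Real.exp (P.KA * d ^ P.αe)) * (expM * Zx - Xc) := by rw [← hd_def]; ring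
      _ = expM * Zx - Xc := by rw [hβmul, one_mul]
  have h2b : βd * Zx ≤ W := by
    have hc5 := P.PL_le_PM n hΦvc (fun z => (Real.exp_pos _).le) x y
    calc βd * Zx ≤ βd * (Real.exp (P.KA * dB x y ^ P.αe) * W) :=
          mul_le_mul_of_nonneg_left hc5 hβd0.le
      _ = (βd * Real.exp (P.KA * d ^ P.αe)) * W := by rw [← hd_def]; ring
      _ = W := by rw [hβmul, one_mul]
  have hYcW0 : 0 ≤ expM * W - Yc := by
    have := P.PM_iter_nonneg n hΦh0 (x, y)
    rwa [hPMh] at this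
  have h2 : Xc * W ≤ βd ^ 2 * Yc * Zx + (1 - βd ^ 2) * expM * (Zx * W) := by
    have s1 : βd * (expM * W - Yc) * W ≤ (expM * Zx - Xc) * W :=
      mul_le_mul_of_nonneg_right h2core hWp.le
    have s2 : βd * (expM * W - Yc) * (βd * Zx) ≤ βd * (expM * W - Yc) * W :=
      mul_le_mul_of_nonneg_left h2b (mul_nonneg hβd0.le hYcW0)
    have s3 : βd ^ 2 * (expM * W - Yc) * Zx ≤ (expM * Zx - Xc) * W := by
      calc βd ^ 2 * (expM * W - Yc) * Zx = βd * (expM * W - Yc) * (βd * Zx) := by ring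
        _ ≤ βd * (expM * W - Yc) * W := s2
        _ ≤ (expM * Zx - Xc) * W := s1
    calc Xc * W = expM * Zx * W - (expM * Zx - Xc) * W := by ring
      _ ≤ expM * Zx * W - βd ^ 2 * (expM * W - Yc) * Zx := sub_le_sub_left s3 _
      _ = βd ^ 2 * Yc * Zx + (1 - βd ^ 2) * expM * (Zx * W) := by ring
  -- (h3), (h4), (h5)
  have h3 : Yc ≤ Real.exp εd * Y := by
    have hmono := P.PM_iter_mono n (Ψ := fun z => Real.exp εd * Ψu z) hΦcc (continuous_const.mul hΨuc) x y ?_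
    · calc Yc ≤ P.PM^[n] (fun z => Real.exp εd * Ψu z) (x, y) := hmono
        _ = Real.exp εd * Y := P.PM_iter_const_mul n _ hΨuc (x, y)
    · intro p q hpq
      show Real.exp (v p + w q) ≤ Real.exp εd * Real.exp (u q)
      rw [← Real.exp_add]
      apply Real.exp_le_exp.2
      have h2 := (abs_le.1 (hv' p q)).2
      have h3 : P.Cs * dB p q ^ P.αe ≤ εd := by
        rw [hεd_def]
        exact mul_le_mul_of_nonneg_left (hrp p q hpq) hCs0.le
      have huq : u q = v q + w q := by rw [hw_def]; ring
      linarith only [h2, h3, huq]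
  have h4 : Zy ≤ Real.exp εd * W := by
    have hmono := P.PM_iter_mono n (Ψ := fun z => Real.exp εd * Φv z) hΨvc (continuous_const.mul hΦvc) x y ?_
    · calc Zy ≤ P.PM^[n] (fun z => Real.exp εd * Φv z) (x, y) := hmono
        _ = Real.exp εd * W := P.PM_iter_const_mul n _ hΦvc (x, y)
    · intro p q hpq
      show Real.exp (v q) ≤ Real.exp εd * Real.exp (v p)
      rw [← Real.exp_add]
      apply Real.exp_le_exp.2
      have h2 := (abs_le.1 (hv' q p)).2
      have h3 : P.Cs * dB q p ^ P.αe ≤ εd := by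
        rw [hεd_def]
        have h5 : dB q p ≤ rn := by rw [dB_comm]; exact hpq
        exact mul_le_mul_of_nonneg_left
          (Real.rpow_le_rpow (dB_nonneg q p) h5 hα0.le) hCs0.le
      linarith only [h2, h3]
  have h5 : Real.exp m * Zy ≤ Y := by
    have hmono := P.PM_iter_mono n (Φ := fun z => Real.exp m * Ψv z) (continuous_const.mul hΨvc) hΨuc x y ?_
    · calc Real.exp m * Zy = P.PM^[n] (fun z => Real.exp m * Ψv z) (x, y) :=
          (P.PM_iter_const_mul n _ hΨvc (x, y)).symm
        _ ≤ Y := hmono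
    · intro p q hpq
      show Real.exp m * Real.exp (v q) ≤ Real.exp (u q)
      rw [← Real.exp_add]
      apply Real.exp_le_exp.2
      have h6 := hm q
      have huq : u q = v q + w q := by rw [hw_def]; ring
      linarith only [h6, huq]
  -- assembly
  set G : ℝ := P.delb + (1 - P.delb) * Real.exp (M - m) with hG_def
  have hdelb := P.delb_pos
  have hG0 : 0 < G := by
    have h7 := P.delb_le_one
    have h8 : 0 ≤ (1 - P.delb) * Real.exp (M - m) :=
      mul_nonneg (by linarith only [h7]) (Real.exp_pos _).le
    rw [hG_def]
    linarith only [hdelb, h8]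
  have hβ2le : βd ^ 2 ≤ 1 := pow_le_one₀ hβd0.le hβd1
  have h1mb : 0 ≤ 1 - βd ^ 2 := by linarith only [hβ2le]
  have hGmaj : βd ^ 2 + (1 - βd ^ 2) * Real.exp (M - m) ≤ G := by
    rw [hG_def]
    apply P.delta_mono _ hβ2le (Real.one_le_exp hMm)
    -- P.delb ≤ βd ^ 2
    have hsq : βd ^ 2 = Real.exp (-(2 * P.KA * d ^ P.αe)) := by
      rw [hβd_def, pow_two, ← Real.exp_add]
      congr 1; ring
    rw [hsq, delb]
    apply Real.exp_le_exp.2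
    have hKA := P.KA_pos
    have hrw : d ^ P.αe ≤ DD ^ P.αe := Real.rpow_le_rpow hd0 hdD hα0.le
    have h9 : 2 * P.KA * d ^ P.αe ≤ 2 * P.KA * DD ^ P.αe :=
      mul_le_mul_of_nonneg_left hrw (by linarith only [hKA])
    exact neg_le_neg h9
  have hexp2εd1 : 1 ≤ Real.exp (2 * εd) := Real.one_le_exp (by linarith only [hεd0])
  have s2' : Yc * Zy ≤ Real.exp (2 * εd) * (Y * W) := by
    have := mul_le_mul h3 h4 hZyp.le (by positivity)
    calc Yc * Zy ≤ Real.exp εd * Y * (Real.exp εd * W) := this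
      _ = Real.exp εd * Real.exp εd * (Y * W) := by ring
      _ = Real.exp (2 * εd) * (Y * W) := by rw [← Real.exp_add]; ring_nf
  have s3' : expM * Zy ≤ Real.exp (M - m) * Y := by
    have hsplit : expM = Real.exp (M - m) * Real.exp m := by
      rw [hexpM_def, ← Real.exp_add]; ring_nf
    calc expM * Zy = Real.exp (M - m) * (Real.exp m * Zy) := by rw [hsplit]; ring
      _ ≤ Real.exp (M - m) * Y := mul_le_mul_of_nonneg_left h5 (Real.exp_pos _).le
  have hfin : X * Zy ≤ Real.exp (4 * εd) * G * (Zx * Y) := by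
    have step1 : Xc * W * Zy ≤ (βd ^ 2 * Yc * Zx + (1 - βd ^ 2) * expM * (Zx * W)) * Zy :=
      mul_le_mul_of_nonneg_right h2 hZyp.le
    have step2 : (βd ^ 2 * Yc * Zx + (1 - βd ^ 2) * expM * (Zx * W)) * Zy
        = βd ^ 2 * Zx * (Yc * Zy) + (1 - βd ^ 2) * (Zx * W) * (expM * Zy) := by ring
    have step3 : βd ^ 2 * Zx * (Yc * Zy)
        ≤ βd ^ 2 * Zx * (Real.exp (2 * εd) * (Y * W)) :=
      mul_le_mul_of_nonneg_left s2' (by positivity)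
    have step4 : (1 - βd ^ 2) * (Zx * W) * (expM * Zy)
        ≤ (1 - βd ^ 2) * (Zx * W) * (Real.exp (M - m) * Y) :=
      mul_le_mul_of_nonneg_left s3' (by positivity)
    have step5 : (1 - βd ^ 2) * (Zx * W) * (Real.exp (M - m) * Y)
        ≤ Real.exp (2 * εd) * ((1 - βd ^ 2) * Real.exp (M - m) * (Y * (Zx * W))) := by
      have heq : (1 - βd ^ 2) * (Zx * W) * (Real.exp (M - m) * Y)
          = (1 - βd ^ 2) * Real.exp (M - m) * (Y * (Zx * W)) := by ring
      rw [heq]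
      apply le_mul_of_one_le_left _ hexp2εd1
      have : 0 ≤ Real.exp (M - m) := (Real.exp_pos _).le
      positivity
    have step6 : βd ^ 2 * Zx * (Real.exp (2 * εd) * (Y * W))
        = Real.exp (2 * εd) * (βd ^ 2 * (Y * (Zx * W))) := by ring
    have step7 : Xc * W * Zy ≤ Real.exp (2 * εd) *
        ((βd ^ 2 + (1 - βd ^ 2) * Real.exp (M - m)) * (Y * (Zx * W))) := by
      have := (step1.trans_eq step2).trans
        (add_le_add (step3.trans_eq step6) (step4.trans step5))
      calc Xc * W * Zy ≤ Real.exp (2 * εd) * (βd ^ 2 * (Y * (Zx * W)))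
            + Real.exp (2 * εd) * ((1 - βd ^ 2) * Real.exp (M - m) * (Y * (Zx * W))) := this
        _ = Real.exp (2 * εd) *
            ((βd ^ 2 + (1 - βd ^ 2) * Real.exp (M - m)) * (Y * (Zx * W))) := by ring
    have step8 : Xc * W * Zy ≤ Real.exp (2 * εd) * (G * (Y * (Zx * W))) := by
      apply step7.trans
      apply mul_le_mul_of_nonneg_left _ (Real.exp_pos _).le
      apply mul_le_mul_of_nonneg_right hGmaj (by positivity)
    have step9 : X * Zy * W ≤ Real.exp (4 * εd) * G * (Zx * Y) * W := by
      have s10 : X * Zy * W ≤ (Real.exp (2 * εd) * Xc) * Zy * W := by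
        have := mul_le_mul_of_nonneg_right
          (mul_le_mul_of_nonneg_right h1 hZyp.le) hWp.le
        calc X * Zy * W ≤ Real.exp (2 * εd) * Xc * Zy * W := this
          _ = (Real.exp (2 * εd) * Xc) * Zy * W := by ring
      have s11 : (Real.exp (2 * εd) * Xc) * Zy * W
          = Real.exp (2 * εd) * (Xc * W * Zy) := by ring
      have s12 : Real.exp (2 * εd) * (Xc * W * Zy)
          ≤ Real.exp (2 * εd) * (Real.exp (2 * εd) * (G * (Y * (Zx * W)))) :=
        mul_le_mul_of_nonneg_left step8 (Real.exp_pos _).le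
      have s13 : Real.exp (2 * εd) * (Real.exp (2 * εd) * (G * (Y * (Zx * W))))
          = Real.exp (4 * εd) * G * (Zx * Y) * W := by
        rw [show Real.exp (4 * εd) = Real.exp (2 * εd) * Real.exp (2 * εd) by
          rw [← Real.exp_add]; ring_nf]
        ring
      calc X * Zy * W ≤ (Real.exp (2 * εd) * Xc) * Zy * W := s10
        _ = Real.exp (2 * εd) * (Xc * W * Zy) := s11
        _ ≤ Real.exp (2 * εd) * (Real.exp (2 * εd) * (G * (Y * (Zx * W)))) := s12
        _ = Real.exp (4 * εd) * G * (Zx * Y) * W := s13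
    exact le_of_mul_le_mul_right step9 hWp
  -- translate back
  have hTx : X = Real.exp (P.T^[n] u x) := (P.PL_iter_exp_fst hu n).2 x y
  have hZxT : Zx = Real.exp (P.T^[n] v x) := (P.PL_iter_exp_fst hv n).2 x y
  have hYT : Y = Real.exp (P.T^[n] u y) := P.PM_iter_exp_snd hu n x y
  have hZyT : Zy = Real.exp (P.T^[n] v y) := P.PM_iter_exp_snd hv n x y
  set L : ℝ := (P.T^[n] u x - P.T^[n] v x) - (P.T^[n] u y - P.T^[n] v y) with hL_def
  have hprod : Real.exp L * (Zx * Y) = X * Zy := by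
    rw [hTx, hZxT, hYT, hZyT, ← Real.exp_add, ← Real.exp_add, ← Real.exp_add]
    congr 1
    rw [hL_def]
    ring
  have hle : Real.exp L ≤ Real.exp (4 * εd) * G := by
    have hZxY : 0 < Zx * Y := mul_pos hZxp hYp
    apply le_of_mul_le_mul_right _ hZxY
    rw [hprod]
    calc X * Zy ≤ Real.exp (4 * εd) * G * (Zx * Y) := hfin
      _ = Real.exp (4 * εd) * G * (Zx * Y) := rfl
  have hfin2 : L ≤ 4 * εd + Real.log G := by
    calc L = Real.log (Real.exp L) := (Real.log_exp _).symm
      _ ≤ Real.log (Real.exp (4 * εd) * G) := Real.log_le_log (Real.exp_pos _) hle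
      _ = 4 * εd + Real.log G := by
          rw [Real.log_mul (Real.exp_ne_zero _) hG0.ne', Real.log_exp]
  exact hfin2

end Pack
end RPF

namespace RPF
namespace Pack

variable (P : Pack)

lemma two_pow_rpow (n : ℕ) : (((2:ℝ) ^ n : ℝ)) ^ P.αe = ((2:ℝ) ^ P.αe) ^ n := by
  rw [← Real.rpow_natCast (2:ℝ) n, ← Real.rpow_mul (by norm_num : (0:ℝ) ≤ 2), mul_comm,
    Real.rpow_mul (by norm_num : (0:ℝ) ≤ 2), Real.rpow_natCast]

lemma rate_bound {d : ℝ} (hd0 : 0 ≤ d) (hdD : d ≤ DD) (n : ℕ) :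
    (d / 2 ^ n) ^ P.αe ≤ DD ^ P.αe * (((2:ℝ) ^ P.αe)⁻¹) ^ n := by
  have h2n : (0:ℝ) < (2:ℝ) ^ n := by positivity
  have h2α : (0:ℝ) < (2:ℝ) ^ P.αe := Real.rpow_pos_of_pos two_pos _
  rw [Real.div_rpow hd0 h2n.le, P.two_pow_rpow n]
  rw [div_eq_mul_inv, ← inv_pow]
  apply mul_le_mul_of_nonneg_right (Real.rpow_le_rpow hd0 hdD P.hα0.le)
  positivity

lemma osc_sub_le_Del {g h : Bs → ℝ} (hg : Continuous g) (hh : Continuous h)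
    (hg' : IsHolderB P.αe P.Cs g) (hh' : IsHolderB P.αe P.Cs h) :
    osc (fun z => g z - h z) ≤ P.Del := by
  apply osc_le_of (hg.sub hh)
  intro x y
  have h1 := (abs_le.1 (hg' x y)).2
  have h2 := (abs_le.1 (hh' y x)).2
  rw [dB_comm y x] at h2
  have h3 : dB x y ^ P.αe ≤ DD ^ P.αe :=
    Real.rpow_le_rpow (dB_nonneg x y) (dB_le_DD x y) P.hα0.le
  have h4 : P.Cs * dB x y ^ P.αe ≤ P.Cs * DD ^ P.αe :=
    mul_le_mul_of_nonneg_left h3 P.Cs_pos.le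
  have h5 : 0 ≤ P.Cs * DD ^ P.αe := by
    have := P.DD_rpow_pos; have := P.Cs_pos; positivity
  show g x - h x - (g y - h y) ≤ P.Del
  unfold Del
  linarith only [h1, h2, h4, h5]

lemma main_osc {u v : Bs → ℝ} (hu : Continuous u) (hv : Continuous v)
    (hu' : IsHolderB P.αe P.Cs u) (hv' : IsHolderB P.αe P.Cs v) (n : ℕ) :
    osc (fun z => P.T^[n] u z - P.T^[n] v z)
      ≤ P.Del * (((2:ℝ) ^ P.αe)⁻¹) ^ n + P.th * osc (fun z => u z - v z) := by
  apply osc_le_of ((P.T_iter_cont hu n).sub (P.T_iter_cont hv n))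
  intro x y
  have hest := P.main_est hu hv hu' hv' n x y
  have h1 : 4 * (P.Cs * (dB x y / 2 ^ n) ^ P.αe)
      ≤ P.Del * (((2:ℝ) ^ P.αe)⁻¹) ^ n := by
    have h2 := P.rate_bound (dB_nonneg x y) (dB_le_DD x y) n
    have h3 : P.Cs * (dB x y / 2 ^ n) ^ P.αe
        ≤ P.Cs * (DD ^ P.αe * (((2:ℝ) ^ P.αe)⁻¹) ^ n) :=
      mul_le_mul_of_nonneg_left h2 P.Cs_pos.le
    unfold Del
    linarith only [h3]
  have h2 : Real.log (P.delb + (1 - P.delb) * Real.exp (osc (fun z => u z - v z)))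
      ≤ P.th * osc (fun z => u z - v z) :=
    P.log_ineq (osc_nonneg (hu.sub hv)) (P.osc_sub_le_Del hu hv hu' hv')
  simp only [Pi.sub_apply]
  linarith only [hest, h1, h2]

lemma T_iter_hol (k : ℕ) {g : Bs → ℝ} (hg : Continuous g) (hg' : IsHolderB P.αe P.Cs g) :
    IsHolderB P.αe P.Cs (P.T^[k] g) := by
  induction k with
  | zero => exact hg'
  | succ k ih =>
    rw [Function.iterate_succ_apply']
    exact P.T_hol (P.T_iter_cont hg k) ih

/-- The zero function. -/
def zeroF : Bs → ℝ := fun _ => 0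

lemma zeroF_cont : Continuous zeroF := continuous_const

lemma zeroF_hol : IsHolderB P.αe P.Cs zeroF := by
  intro x y
  have h1 : (0:ℝ) ≤ P.Cs := P.Cs_pos.le
  have h2 : (0:ℝ) ≤ dB x y ^ P.αe := Real.rpow_nonneg (dB_nonneg x y) _
  simp [zeroF]
  positivity

/-- The normalized operator. -/
def S (g : Bs → ℝ) : Bs → ℝ := fun x => P.T g x - P.T g pt

lemma S_cont {g : Bs → ℝ} (hg : Continuous g) : Continuous (P.S g) :=
  (P.T_cont hg).sub continuous_const

lemma S_hol {g : Bs → ℝ} (hg : Continuous g) (hg' : IsHolderB P.αe P.Cs g) :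
    IsHolderB P.αe P.Cs (P.S g) := by
  intro x y
  show |P.T g x - P.T g pt - (P.T g y - P.T g pt)| ≤ _
  rw [sub_sub_sub_cancel_right]
  exact P.T_hol hg hg' x y

lemma S_pt (g : Bs → ℝ) : P.S g pt = 0 := sub_self _

/-- The iteration sequence. -/
def useq (k : ℕ) : Bs → ℝ := (P.S)^[k] zeroF

lemma useq_props (k : ℕ) :
    Continuous (P.useq k) ∧ IsHolderB P.αe P.Cs (P.useq k) ∧ P.useq k pt = 0 := by
  induction k with
  | zero => exact ⟨continuous_const, P.zeroF_hol, rfl⟩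
  | succ k ih =>
    have h1 : P.useq (k + 1) = P.S (P.useq k) := by
      unfold useq
      rw [Function.iterate_succ_apply']
    rw [h1]
    exact ⟨P.S_cont ih.1, P.S_hol ih.1 ih.2.1, P.S_pt _⟩

lemma S_iter_eq (k : ℕ) {g : Bs → ℝ} (hg : Continuous g) (hgpt : g pt = 0) :
    (P.S)^[k] g = fun x => P.T^[k] g x - P.T^[k] g pt := by
  induction k generalizing g with
  | zero =>
    funext x
    simp [hgpt]
  | succ k ih =>
    rw [Function.iterate_succ_apply]
    rw [ih (P.S_cont hg) (P.S_pt g)]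
    have hSg : P.S g = fun x => P.T g x + -(P.T g pt) := by
      funext x
      show P.T g x - P.T g pt = _
      ring
    have h2 : P.T^[k] (P.S g) = fun x => P.T^[k] (P.T g) x + -(P.T g pt) := by
      rw [hSg]
      exact P.T_iter_add_const (P.T_cont hg) _ k
    funext x
    rw [h2]
    have h3 : P.T^[k] (P.T g) = P.T^[k + 1] g := (Function.iterate_succ_apply P.T k g).symm
    rw [h3]
    ring

lemma one_div_one_sub_th : 1 + P.th * (1 - P.th)⁻¹ = (1 - P.th)⁻¹ := by
  have h1 : 0 < 1 - P.th := by linarith [P.th_lt_one]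
  field_simp
  ring

lemma exists_fixed : ∃ φ : Bs → ℝ, Continuous φ ∧ IsHolderB P.αe P.Cs φ ∧
    ∀ x, P.S φ x = φ x := by
  have hprops := P.useq_props
  set ρ : ℝ := ((2:ℝ) ^ P.αe)⁻¹ with hρ_def
  have h2α : (1:ℝ) < (2:ℝ) ^ P.αe := P.two_rpow_gt
  have hρ0 : 0 ≤ ρ := by rw [hρ_def]; positivity
  have hρ1 : ρ < 1 := by
    rw [hρ_def, inv_lt_one_iff₀]
    right; exact h2α
  have hθ0 := P.th_nonneg
  have hθ1 := P.th_lt_one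
  have hDel := P.Del_pos
  have h1θ : 0 < 1 - P.th := by linarith
  -- the master quantities
  set E : ℕ → ℕ → ℝ := fun k j => osc (fun z => P.T^[k] (P.useq j) z - P.T^[k] zeroF z)
    with hE_def
  have hEcont : ∀ k j, Continuous (fun z => P.T^[k] (P.useq j) z - P.T^[k] zeroF z) :=
    fun k j => (P.T_iter_cont (hprops j).1 k).sub (P.T_iter_cont zeroF_cont k)
  have base : ∀ k j, E k j ≤ P.Del := by
    intro k j
    exact P.osc_sub_le_Del (P.T_iter_cont (hprops j).1 k) (P.T_iter_cont zeroF_cont k)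
      (P.T_iter_hol k (hprops j).1 (hprops j).2.1) (P.T_iter_hol k zeroF_cont P.zeroF_hol)
  have key : ∀ n k j, E (n + k) j ≤ P.Del * ρ ^ n + P.th * E k j := by
    intro n k j
    have h := P.main_osc (P.T_iter_cont (hprops j).1 k) (P.T_iter_cont zeroF_cont k)
      (P.T_iter_hol k (hprops j).1 (hprops j).2.1) (P.T_iter_hol k zeroF_cont P.zeroF_hol) n
    have e1 : ∀ z, P.T^[n] (P.T^[k] (P.useq j)) z = P.T^[n + k] (P.useq j) z := by
      intro z
      rw [Function.iterate_add_apply]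
    have e2 : ∀ z, P.T^[n] (P.T^[k] zeroF) z = P.T^[n + k] zeroF z := by
      intro z
      rw [Function.iterate_add_apply]
    have e3 : (fun z => P.T^[n] (P.T^[k] (P.useq j)) z - P.T^[n] (P.T^[k] zeroF) z)
        = fun z => P.T^[n + k] (P.useq j) z - P.T^[n + k] zeroF z := by
      funext z
      rw [e1, e2]
    rw [e3] at h
    exact h
  have geom : ∀ i n k j, E (i * n + k) j ≤ P.Del * ρ ^ n * (1 - P.th)⁻¹ + P.th ^ i * P.Del := by
    intro i n
    induction i with
    | zero =>
      intro k j
      have h1 : 0 ≤ P.Del * ρ ^ n * (1 - P.th)⁻¹ := by positivity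
      have h2 := base (0 * n + k) j
      calc E (0 * n + k) j ≤ P.Del := h2
        _ ≤ P.Del * ρ ^ n * (1 - P.th)⁻¹ + P.th ^ 0 * P.Del := by
            rw [pow_zero, one_mul]; linarith only [h1]
    | succ i ih =>
      intro k j
      have harith : (i + 1) * n + k = n + (i * n + k) := by ring
      rw [harith]
      have h1 := key n (i * n + k) j
      have h2 := ih k j
      have h3 : P.th * E (i * n + k) j
          ≤ P.th * (P.Del * ρ ^ n * (1 - P.th)⁻¹ + P.th ^ i * P.Del) :=
        mul_le_mul_of_nonneg_left h2 hθ0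
      have h4 : P.Del * ρ ^ n + P.th * (P.Del * ρ ^ n * (1 - P.th)⁻¹ + P.th ^ i * P.Del)
          = P.Del * ρ ^ n * (1 + P.th * (1 - P.th)⁻¹) + P.th ^ (i + 1) * P.Del := by
        ring
      have h5 := P.one_div_one_sub_th
      calc E (n + (i * n + k)) j ≤ P.Del * ρ ^ n + P.th * E (i * n + k) j := h1
        _ ≤ P.Del * ρ ^ n + P.th * (P.Del * ρ ^ n * (1 - P.th)⁻¹ + P.th ^ i * P.Del) := by
            linarith only [h3]
        _ = P.Del * ρ ^ n * (1 + P.th * (1 - P.th)⁻¹) + P.th ^ (i + 1) * P.Del := h4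
        _ = P.Del * ρ ^ n * (1 - P.th)⁻¹ + P.th ^ (i + 1) * P.Del := by rw [h5]
  -- Cauchy bound
  have hbound : ∀ ε : ℝ, 0 < ε → ∃ K, ∀ k, K ≤ k → ∀ j x,
      |P.useq (k + j) x - P.useq k x| ≤ ε := by
    intro ε hε
    obtain ⟨n, hn⟩ : ∃ n, P.Del * ρ ^ n * (1 - P.th)⁻¹ < ε / 2 := by
      have ht : Filter.Tendsto (fun n : ℕ => P.Del * ρ ^ n * (1 - P.th)⁻¹) atTop (𝓝 0) := by
        have h0 := tendsto_pow_atTop_nhds_zero_of_lt_one hρ0 hρ1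
        have h1 := (h0.const_mul P.Del).mul_const (1 - P.th)⁻¹
        simpa using h1
      exact (ht.eventually (eventually_lt_nhds (half_pos hε))).exists
    obtain ⟨i, hi⟩ : ∃ i, P.th ^ i * P.Del < ε / 2 := by
      have ht : Filter.Tendsto (fun i : ℕ => P.th ^ i * P.Del) atTop (𝓝 0) := by
        have h0 := tendsto_pow_atTop_nhds_zero_of_lt_one hθ0 hθ1
        have h1 := h0.mul_const P.Del
        simpa using h1
      exact (ht.eventually (eventually_lt_nhds (half_pos hε))).exists
    refine ⟨i * n, fun k hk j x => ?_⟩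
    -- identify the difference with an oscillation
    have hu1 : P.useq (k + j) = P.S^[k] (P.useq j) := by
      unfold useq
      rw [Function.iterate_add_apply]
    have hu2 : P.S^[k] (P.useq j)
        = fun x => P.T^[k] (P.useq j) x - P.T^[k] (P.useq j) pt :=
      P.S_iter_eq k (hprops j).1 (hprops j).2.2
    have hu3 : P.useq k = fun x => P.T^[k] zeroF x - P.T^[k] zeroF pt :=
      P.S_iter_eq k zeroF_cont rfl
    set Wf : Bs → ℝ := fun z => P.T^[k] (P.useq j) z - P.T^[k] zeroF z with hW_def
    have hWc : Continuous Wf := hEcont k j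
    have hdiff : P.useq (k + j) x - P.useq k x = Wf x - Wf pt := by
      rw [hu1, hu2, hu3]
      show P.T^[k] (P.useq j) x - P.T^[k] (P.useq j) pt
          - (P.T^[k] zeroF x - P.T^[k] zeroF pt) = _
      rw [hW_def]
      ring
    have habs : |P.useq (k + j) x - P.useq k x| ≤ E k j := by
      rw [hdiff, abs_sub_le_iff]
      constructor
      · exact sub_le_osc hWc x pt
      · have := sub_le_osc hWc pt x
        linarith only [this]
    have hEk : E k j ≤ P.Del * ρ ^ n * (1 - P.th)⁻¹ + P.th ^ i * P.Del := by
      have hsplit : i * n + (k - i * n) = k := Nat.add_sub_cancel' hk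
      have := geom i n (k - i * n) j
      rwa [hsplit] at this
    calc |P.useq (k + j) x - P.useq k x| ≤ E k j := habs
      _ ≤ P.Del * ρ ^ n * (1 - P.th)⁻¹ + P.th ^ i * P.Del := hEk
      _ ≤ ε := by linarith only [hn, hi]
  -- pointwise limits
  have hcauchy : ∀ x : Bs, ∃ l : ℝ, Filter.Tendsto (fun k => P.useq k x) atTop (𝓝 l) := by
    intro x
    apply cauchySeq_tendsto_of_complete
    rw [Metric.cauchySeq_iff']
    intro ε hε
    obtain ⟨K, hK⟩ := hbound (ε / 2) (half_pos hε)
    refine ⟨K, fun n hn => ?_⟩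
    have h := hK K le_rfl (n - K) x
    rw [Nat.add_sub_cancel' hn] at h
    rw [Real.dist_eq]
    linarith only [h, half_pos hε, hε]
  choose φ hφ using hcauchy
  -- uniform control
  have hunif : ∀ ε : ℝ, 0 < ε → ∃ K, ∀ k, K ≤ k → ∀ x, |φ x - P.useq k x| ≤ ε := by
    intro ε hε
    obtain ⟨K, hK⟩ := hbound ε hε
    refine ⟨K, fun k hk x => ?_⟩
    have hT : Filter.Tendsto (fun j => P.useq (k + j) x) atTop (𝓝 (φ x)) := by
      have h1 := (hφ x).comp (tendsto_add_atTop_nat k)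
      have h2 : (fun j : ℕ => P.useq (j + k) x) = fun j : ℕ => P.useq (k + j) x := by
        funext j
        rw [Nat.add_comm]
      rw [← h2]
      exact h1
    have hle : ∀ j, |P.useq (k + j) x - P.useq k x| ≤ ε := fun j => hK k hk j x
    have hT2 : Filter.Tendsto (fun j => |P.useq (k + j) x - P.useq k x|) atTop
        (𝓝 (|φ x - P.useq k x|)) := (hT.sub_const _).abs
    exact le_of_tendsto hT2 (Filter.Eventually.of_forall hle)
  -- Hölder property of the limit
  have hφhol : IsHolderB P.αe P.Cs φ := by
    intro x y
    have hT : Filter.Tendsto (fun k => |P.useq k x - P.useq k y|) atTop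
        (𝓝 (|φ x - φ y|)) := (((hφ x).sub (hφ y))).abs
    exact le_of_tendsto hT (Filter.Eventually.of_forall fun k => (hprops k).2.1 x y)
  have hφc : Continuous φ := continuous_of_holderB P.hα0 P.Cs_pos.le hφhol
  refine ⟨φ, hφc, hφhol, ?_⟩
  intro x
  have hx1 : Filter.Tendsto (fun k => P.useq (k + 1) x) atTop (𝓝 (φ x)) :=
    (hφ x).comp (tendsto_add_atTop_nat 1)
  have hx2 : Filter.Tendsto (fun k => P.useq (k + 1) x) atTop (𝓝 (P.S φ x)) := by
    rw [Metric.tendsto_nhds]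
    intro ε hε
    obtain ⟨K, hK⟩ := hunif (ε / 3) (by linarith only [hε])
    filter_upwards [Filter.eventually_ge_atTop K] with k hk
    have hlip : ∀ z, |P.T (P.useq k) z - P.T φ z| ≤ ε / 3 := by
      intro z
      apply P.T_lip (hprops k).1 hφc _ z
      intro z'
      rw [abs_sub_comm]
      exact hK k hk z'
    have hrw : P.useq (k + 1) = P.S (P.useq k) := by
      unfold useq
      rw [Function.iterate_succ_apply']
    rw [Real.dist_eq, hrw]
    have e1 := hlip x
    have e2 := hlip pt
    have e3 : P.S (P.useq k) x - P.S φ x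
        = (P.T (P.useq k) x - P.T φ x) - (P.T (P.useq k) pt - P.T φ pt) := by
      show P.T (P.useq k) x - P.T (P.useq k) pt - (P.T φ x - P.T φ pt) = _
      ring
    rw [e3]
    have e4 := abs_sub (P.T (P.useq k) x - P.T φ x) (P.T (P.useq k) pt - P.T φ pt)
    calc |(P.T (P.useq k) x - P.T φ x) - (P.T (P.useq k) pt - P.T φ pt)|
        ≤ |P.T (P.useq k) x - P.T φ x| + |P.T (P.useq k) pt - P.T φ pt| := e4
      _ ≤ ε / 3 + ε / 3 := add_le_add e1 e2
      _ < ε := by linarith only [hε]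
  exact tendsto_nhds_unique hx2 hx1

end Pack
end RPF

theorem exists_positive_eigenfunction (α H : ℝ) (hα0 : 0 < α) (hα1 : α ≤ 1)
    (A : Bs → ℝ) (hA : IsHolderB α H A) :
    ∃ (lam : ℝ) (ψ : Bs → ℝ), 0 < lam ∧ Continuous ψ ∧ (∀ x, 0 < ψ x) ∧
      (∀ x, Ruelle A ψ x = lam * ψ x) ∧
      IsHolderB α ((2 : ℝ) ^ α / ((2 : ℝ) ^ α - 1) * H) (fun x => Real.log (ψ x)) := by
  rcases lt_trichotomy H 0 with hH | hH | hH
  · -- H < 0 is impossible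
    exfalso
    set x0 : Bs := fun _ => (0 : Circ) with hx0
    set y0 : Bs := fun _ => ((Real.pi : ℝ) : Circ) with hy0
    have hne : ((Real.pi : ℝ) : Circ) ≠ (0 : Circ) := by
      rw [Ne, AddCircle.coe_eq_zero_iff]
      rintro ⟨n, hn⟩
      rw [zsmul_eq_mul] at hn
      have hπ := Real.pi_ne_zero
      have h2n : ((2 * n - 1 : ℤ) : ℝ) * Real.pi = 0 := by push_cast; nlinarith [hn]
      have h3 : ((2 * n - 1 : ℤ) : ℝ) = 0 := by
        rcases mul_eq_zero.1 h2n with h | h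
        · exact h
        · exact absurd h hπ
      have h4 : (2 * n - 1 : ℤ) = 0 := by exact_mod_cast h3
      omega
    have hd : 0 < dist ((0 : Circ)) (((Real.pi : ℝ) : Circ)) := dist_pos.2 (Ne.symm hne)
    have hdB : dB x0 y0 = 2 * dist ((0 : Circ)) (((Real.pi : ℝ) : Circ)) := by
      unfold dB
      rw [hx0, hy0]
      rw [tsum_mul_right, tsum_geometric_two]
    have hdB0 : 0 < dB x0 y0 := by rw [hdB]; linarith
    have h := hA x0 y0
    have h2 : H * dB x0 y0 ^ α < 0 :=
      mul_neg_of_neg_of_pos hH (Real.rpow_pos_of_pos hdB0 α)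
    have h3 := abs_nonneg (A x0 - A y0)
    linarith
  · -- H = 0 : A is constant
    subst hH
    have hconst : ∀ x y, A x = A y := by
      intro x y
      have h := hA x y
      rw [zero_mul] at h
      have h2 := abs_nonneg (A x - A y)
      have h3 : |A x - A y| = 0 := le_antisymm h h2
      rwa [abs_eq_zero, sub_eq_zero] at h3
    refine ⟨Real.exp (A RPF.pt), fun _ => 1, Real.exp_pos _, continuous_const,
      fun x => one_pos, ?_, ?_⟩
    · intro x
      unfold Ruelle
      have h1 : ∀ a : Circ, Real.exp (A (cons a x)) * (1:ℝ) = Real.exp (A RPF.pt) := by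
        intro a; rw [mul_one, hconst (cons a x) RPF.pt]
      simp_rw [h1]
      rw [integral_const]
      simp [measure_univ]
    · intro x y
      simp
  · -- H > 0 : the main construction
    set P : RPF.Pack := RPF.Pack.mk α H A hα0 hα1 hH hA with hP_def
    obtain ⟨φ, hφc, hφhol, hfix⟩ := P.exists_fixed
    refine ⟨Real.exp (P.T φ RPF.pt), fun x => Real.exp (φ x), Real.exp_pos _,
      Real.continuous_exp.comp hφc, fun x => Real.exp_pos _, ?_, ?_⟩
    · intro x
      unfold Ruelle
      have h1 : ∀ a : Circ, Real.exp (A (cons a x)) * Real.exp (φ (cons a x))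
          = Real.exp (P.A (cons a x) + φ (cons a x)) := by
        intro a; rw [Real.exp_add]
      simp_rw [h1]
      rw [← P.exp_T hφc x]
      have h3 : P.T φ x - P.T φ RPF.pt = φ x := hfix x
      have h2 : P.T φ x = φ x + P.T φ RPF.pt := by linarith
      rw [h2, Real.exp_add]
      ring
    · intro x y
      have h := hφhol x y
      simp only [Real.log_exp]
      exact h
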